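/- arXiv:1101.5071 — 5 statements merged into one kernel-verified Lean document; each statement's English description precedes it below -/
import Mathlib

section
/- For a strict partition λ = (a₁ > a₂ > ... > a_m > 0) of n, the total number of bar lengths (counted with multiplicity) equals n, i.e. the multiset B(λ) = ⋃_i ({1,...,a_i} ∪ {a_i + a_j : j > i} \ {a_i - a_j : j > i}) has cardinality n. -/
namespace BarPartitions

/-- A strict (bar) partition given as a strictly decreasing list of positive integers. -/
def IsStrictList (l : List ℕ) : Prop := l.Chain' (· > ·) ∧ ∀ a ∈ l, 0 < a

/-- The multiset of bar lengths of a strict partition `l = (a₁ > ... > a_m)`: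
`⋃ᵢ ({1,…,aᵢ} ∪ {aᵢ + aⱼ : j > i}) \ {aᵢ - aⱼ : j > i}` as multisets. -/
def barMultisetL (l : List ℕ) : Multiset ℕ :=
  ((List.range l.length).map (fun i =>
      ((Multiset.range (l.getD i 0)).map (· + 1))
      + ((l.drop (i + 1)).map (fun b => l.getD i 0 + b) : Multiset ℕ))).sum
  - ((List.range l.length).map (fun i =>
      ((l.drop (i + 1)).map (fun b => l.getD i 0 - b) : Multiset ℕ))).sum

/-- The doubled partition `D(λ)` with Frobenius coordinates `(a₁,…,a_m | a₁-1,…,a_m-1)`: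
row `i` (0-indexed, `i < m`) has `aᵢ + i + 1` cells; the remaining rows are given by the
column lengths `c + a_c` (0-indexed column `c < m`). -/
def doubledP (l : List ℕ) : List ℕ :=
  (List.range l.length).map (fun i => l.getD i 0 + i + 1) ++
  (List.range (l.headD 0 - l.length)).map (fun k =>
    ((List.range l.length).filter (fun c => l.length + k + 1 ≤ c + l.getD c 0)).length)

/-- Length of column `c` of the Young diagram of the partition `μ` (list of parts). -/
def colLen (μ : List ℕ) (c : ℕ) : ℕ := (μ.filter (fun p => c < p)).length

/-- Hook length of the cell `(r, c)` (0-indexed) of the partition `μ`. -/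
def hookLen (μ : List ℕ) (r c : ℕ) : ℕ := (μ.getD r 0 - c) + (colLen μ c - r) - 1

/-- The multiset of hook lengths of the partition `μ`. -/
def hookLengths (μ : List ℕ) : Multiset ℕ :=
  ((List.range μ.length).map (fun r =>
    ((Multiset.range (μ.getD r 0)).map (fun c => hookLen μ r c)))).sum

/-- d-residue of the hand node of any hook in row `r` of `μ`. -/
def handRes (d : ℕ) (μ : List ℕ) (r : ℕ) : ZMod d :=
  (((μ.getD r 0 : ℤ) - 1 - (r : ℤ) : ℤ) : ZMod d)

/-- d-residue of the foot node of any hook in column `c` of `μ`. -/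
def footRes (d : ℕ) (μ : List ℕ) (c : ℕ) : ZMod d :=
  (((c : ℤ) - (colLen μ c : ℤ) + 1 : ℤ) : ZMod d)

/-- The β-set of `μ` with `N` elements (first-column hook lengths, padded with `0` parts). -/
def betaList (μ : List ℕ) (N : ℕ) : List ℕ :=
  (List.range N).map (fun k => μ.getD k 0 + (N - 1 - k))

/-- The least multiple of `d` that is `≥ len`. -/
def minMul (d len : ℕ) : ℕ := d * ((len + d - 1) / d)

/-- Number of beads on runner `i` of the minimally normalized `d`-abacus of `μ`. -/
def beadCountL (d : ℕ) (μ : List ℕ) (i : ℕ) : ℕ :=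
  ((betaList μ (minMul d μ.length)).filter (fun v => v % d = i)).length

/-! ### Finset versions: a strict partition as its finite set of (positive) parts. -/

/-- The parts of a strict partition, sorted decreasingly. -/
def sortedParts (s : Finset ℕ) : List ℕ := (s.sort (· ≤ ·)).reverse

/-- Bead counts of the minimally normalized `d`-abacus of the doubled partition `D(λ)`,
where `λ` is the strict partition with part set `s` (as integers). -/
def beadCount (d : ℕ) (s : Finset ℕ) (i : ℕ) : ℤ :=
  (beadCountL d (doubledP (sortedParts s)) i : ℤ)

/-- The multiset of bar lengths of the strict partition with (positive) part set `s`. -/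
def barMultisetF (s : Finset ℕ) : Multiset ℕ :=
  s.val.bind (fun a => ((Multiset.range a).map (· + 1)).filter (fun h => a - h ∉ s))
  + s.val.bind (fun a => (s.filter (fun b => b < a)).val.map (fun b => a + b))

/-- Removal of one bar of length `h` from the strict partition `s`, yielding `t`:
either remove two parts `a ≠ b` with `a + b = h`, or replace a part `a` by `a - h`
(deleting it when `h = a`), provided `a - h` is not already a part. -/
def RemoveBarLen (h : ℕ) (s t : Finset ℕ) : Prop :=
  (∃ a ∈ s, ∃ b ∈ s, a ≠ b ∧ h = a + b ∧ t = (s.erase a).erase b) ∨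
  (∃ a ∈ s, 0 < h ∧ h ≤ a ∧ a - h ∉ s ∧
    t = if h = a then s.erase a else insert (a - h) (s.erase a))

/-- Removal of one bar of length divisible by `d`. -/
def RemoveDBar (d : ℕ) (s t : Finset ℕ) : Prop := ∃ h, d ∣ h ∧ RemoveBarLen h s t

/-- `c` is the `d̄`-core of `s`: obtained from `s` by removing bars of length divisible
by `d`, and admitting no further such removal. -/
def IsBarCore (d : ℕ) (s c : Finset ℕ) : Prop :=
  Relation.ReflTransGen (RemoveDBar d) s c ∧ ∀ t, ¬ RemoveDBar d c t

/-- The partition (multiset of positive parts) associated to a β-set `X`. -/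
def partitionOfBetaSet (X : Finset ℕ) : Multiset ℕ :=
  (((X.sort (· ≤ ·)).zipIdx.map (fun p => p.1 - p.2) : List ℕ) : Multiset ℕ).filter (fun v => 0 < v)

/-- Positions of the parts of `s` lying on runner `i` of the `d`-abacus. -/
def runnerSet (d i : ℕ) (s : Finset ℕ) : Finset ℕ :=
  (s.filter (fun a => a % d = i)).image (fun a => a / d)

/-- The `i`-th component (`1 ≤ i ≤ (d-1)/2`) of the `d̄`-quotient of `s`: the partition
determined by the pair of runners `(i, d - i)` via the associated charged β-set. -/
def barQuotComp (d i : ℕ) (s : Finset ℕ) : Multiset ℕ :=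
  let A := runnerSet d i s
  let B := runnerSet d (d - i) s
  let N := B.sup id + 1
  partitionOfBetaSet
    ((A.image (fun a => N + a)) ∪ ((Finset.range N).filter (fun b => b ∉ B)).image (fun b => N - 1 - b))

/-- Two strict partitions have the same `d̄`-quotient. -/
def SameBarQuotient (d : ℕ) (s t : Finset ℕ) : Prop :=
  runnerSet d 0 s = runnerSet d 0 t ∧
  ∀ i, 1 ≤ i → i ≤ (d - 1) / 2 → barQuotComp d i s = barQuotComp d i t

/-- `q` is the `d̄`-quotient partition of `s`: the unique strict partition with empty
`d̄`-core and the same `d̄`-quotient as `s`. -/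
def IsBarQuotientPartition (d : ℕ) (s q : Finset ℕ) : Prop :=
  IsBarCore d q ∅ ∧ SameBarQuotient d s q

/-- The set of modified part lengths: a part `p ≡ i (mod d)` is modified to
`|p + d(xᵢ - x₀)|`. -/
def modParts (d : ℕ) (x : ℕ → ℤ) (q : Finset ℕ) : Finset ℕ :=
  q.image (fun (p : ℕ) => ((p : ℤ) + (d : ℤ) * (x (p % d) - x 0)).natAbs)

/-- The multiset of modified bar lengths: a bar of length `h` corresponding to a bead
on runner `i` and an empty spot on runner `j` is modified to `|h + d(xᵢ - xⱼ)|`. -/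
def modBarLengths (d : ℕ) (x : ℕ → ℤ) (q : Finset ℕ) : Multiset ℕ :=
  q.val.bind (fun a =>
    (((Multiset.range a).map (· + 1)).filter (fun h => a - h ∉ q)).map
      (fun (h : ℕ) => ((h : ℤ) + (d : ℤ) * (x (a % d) - x ((a - h) % d))).natAbs))
  + q.val.bind (fun a =>
      (q.filter (fun b => b < a)).val.map
        (fun (b : ℕ) => (((a : ℤ) + (b : ℤ)) + (d : ℤ) * (x (a % d) - x ((d - b % d) % d))).natAbs))

/-- the multiset of bar lengths of a strict partition of `n` has cardinality `n`. -/
theorem card_barMultiset (n : ℕ) (l : List ℕ) (hl : IsStrictList l) (hn : l.sum = n) :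
    Multiset.card (barMultisetL l) = n := by
  obtain ⟨hchain, hpos⟩ := hl
  have hpw : l.Pairwise (· > ·) := List.isChain_iff_pairwise.mp hchain
  have hnd : l.Nodup := hpw.imp (fun h => (ne_of_gt h))
  -- key: per-row inequality
  have key : ∀ i < l.length,
      ((l.drop (i + 1)).map (fun b => l.getD i 0 - b) : Multiset ℕ) ≤
        (Multiset.range (l.getD i 0)).map (· + 1) := by
    intro i hi
    have hdnd : (l.drop (i+1)).Nodup := hnd.sublist (List.drop_sublist _ _)
    have hlt : ∀ b ∈ l.drop (i+1), b < l.getD i 0 := by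
      intro b hb
      rw [List.mem_iff_getElem] at hb
      obtain ⟨j, hj, rfl⟩ := hb
      rw [List.getElem_drop]
      have := List.pairwise_iff_getElem.mp hpw i (i+1+j) hi (by
        have := (List.length_drop (i := i+1) (l := l)) ▸ hj; omega) (by omega)
      rw [List.getD_eq_getElem l 0 hi]
      exact this
    rw [Multiset.le_iff_subset]
    · intro x hx
      simp only [Multiset.mem_coe, List.mem_map] at hx
      obtain ⟨b, hb, rfl⟩ := hx
      have h1 := hlt b hb
      have h2 := hpos b (List.mem_of_mem_drop hb)
      simp only [Multiset.mem_map, Multiset.mem_range]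
      exact ⟨l.getD i 0 - b - 1, by omega, by omega⟩
    · rw [Multiset.coe_nodup]
      refine hdnd.map_on ?_
      intro b hb c hc h
      have := hlt b hb; have := hlt c hc
      omega
  have hle : ((List.range l.length).map (fun i =>
      ((l.drop (i + 1)).map (fun b => l.getD i 0 - b) : Multiset ℕ))).sum ≤
      ((List.range l.length).map (fun i =>
      ((Multiset.range (l.getD i 0)).map (· + 1))
      + ((l.drop (i + 1)).map (fun b => l.getD i 0 + b) : Multiset ℕ))).sum := by
    apply List.sum_le_sum
    intro i hi
    rw [List.mem_range] at hi
    calc ((l.drop (i + 1)).map (fun b => l.getD i 0 - b) : Multiset ℕ)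
        ≤ (Multiset.range (l.getD i 0)).map (· + 1) := key i hi
      _ ≤ _ := Multiset.le_add_right _ _
  rw [barMultisetL, Multiset.card_sub hle]
  have hcs : ∀ L : List (Multiset ℕ), Multiset.card L.sum = (L.map Multiset.card).sum :=
    fun L => map_list_sum Multiset.cardHom L
  rw [hcs, hcs]
  simp only [List.map_map, Function.comp_def, Multiset.card_add,
    Multiset.card_map, Multiset.card_range, Multiset.coe_card, List.length_map,
    List.length_drop]
  have hsum : ((List.range l.length).map (fun i => l.getD i 0)).sum = n := by
    rw [← hn]; congr 1
    apply List.ext_getElem (by simp)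
    intro j h1 h2
    simp [List.getElem?_eq_getElem h2]
  have : ∀ (f g : ℕ → ℕ) (L : List ℕ), (L.map (fun i => f i + g i)).sum
      = (L.map f).sum + (L.map g).sum := by
    intro f g L; induction L with
    | nil => simp
    | cons a t ih => simp [ih]; omega
  rw [this (fun i => l.getD i 0) (fun i => l.length - (i+1))]
  omega


end BarPartitions
end

section
/- Let λ be a strict partition, d ≥ 3 odd, and consider the d-abacus of D(λ) built from a β-set X for D(λ) with |X| a multiple of d, minimal with this property. Writing x_i for the number of beads on runner i (0 ≤ i ≤ d-1), one has x_i + x_{d-i mod d} = x_j + x_{d-j mod d} for all 0 ≤ i, j ≤ d-1. -/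
namespace BarPartitions

def Q (l : List ℕ) (k : ℕ) : ℕ :=
  ((List.range l.length).filter (fun c => k + 1 ≤ c + l.getD c 0)).length

section
variable {l : List ℕ}

lemma strictD (hl : IsStrictList l) :
    ∀ i j, i < j → j < l.length → l.getD j 0 < l.getD i 0 := by
  intro i j hij hj
  have hp : l.Pairwise (· > ·) := List.isChain_iff_pairwise.mp hl.1
  rw [List.getD_eq_getElem l 0 hj, List.getD_eq_getElem l 0 (hij.trans hj)]
  exact List.pairwise_iff_getElem.mp hp i j (hij.trans hj) hj hij

lemma posD (hl : IsStrictList l) : ∀ k, k < l.length → 0 < l.getD k 0 := by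
  intro k hk
  rw [List.getD_eq_getElem l 0 hk]
  exact hl.2 _ (List.getElem_mem hk)

lemma monoSum (hl : IsStrictList l) :
    ∀ i j, i ≤ j → j < l.length → l.getD j 0 + j ≤ l.getD i 0 + i := by
  intro i j
  induction j with
  | zero => intro hij _; interval_cases i; omega
  | succ n ih =>
    intro hij hj
    rcases Nat.eq_or_lt_of_le hij with rfl | h
    · omega
    · have h1 := strictD hl n (n+1) (by omega) hj
      have := ih (by omega) (by omega)
      omega

lemma headD_eq (h : l.length ≠ 0) : l.headD 0 = l.getD 0 0 := by
  cases l with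
  | nil => simp at h
  | cons x xs => rfl

lemma lenle (hl : IsStrictList l) (h : l.length ≠ 0) : l.length ≤ l.headD 0 := by
  have h1 := monoSum hl 0 (l.length - 1) (by omega) (by omega)
  have h2 := posD hl (l.length - 1) (by omega)
  rw [headD_eq h]
  omega

lemma getD_le_head (hl : IsStrictList l) (k : ℕ) (hk : k < l.length) :
    l.getD k 0 + k ≤ l.headD 0 := by
  have := monoSum hl 0 k (by omega) hk
  rw [headD_eq (by omega)]
  omega

lemma len_doubledP (hl : IsStrictList l) : (doubledP l).length = l.headD 0 := by
  rcases Nat.eq_zero_or_pos l.length with h | h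
  · have : l = [] := List.length_eq_zero_iff.mp h
    subst this; simp [doubledP]
  · have := lenle hl (by omega)
    simp only [doubledP, List.length_append, List.length_map, List.length_range]
    omega

lemma getD_doubledP_lt (k : ℕ) (hk : k < l.length) :
    (doubledP l).getD k 0 = l.getD k 0 + k + 1 := by
  rw [doubledP, List.getD_append _ _ _ _ (by simpa using hk)]
  rw [List.getD_eq_getElem _ 0 (by simpa using hk)]
  simp

lemma Q_le (k : ℕ) : Q l k ≤ l.length := by
  rw [Q]
  simpa using List.length_filter_le _ (List.range l.length)

lemma Q_anti (k k' : ℕ) (h : k ≤ k') : Q l k' ≤ Q l k := by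
  simp only [Q, ← List.countP_eq_length_filter]
  apply List.countP_mono_left
  intro c _ hc
  simp only [decide_eq_true_eq] at *
  omega

lemma Q_down (hl : IsStrictList l) (k c c' : ℕ) (hc : c < l.length) (hcc : c' ≤ c)
    (h : k + 1 ≤ c + l.getD c 0) : k + 1 ≤ c' + l.getD c' 0 := by
  have := monoSum hl c' c hcc hc
  omega

lemma getD_doubledP_ge (hl : IsStrictList l) (k : ℕ) (hk : l.length ≤ k) :
    (doubledP l).getD k 0 = Q l k := by
  rcases Nat.eq_zero_or_pos l.length with h0 | h0
  · have : l = [] := List.length_eq_zero_iff.mp h0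
    subst this; simp [doubledP, Q]
  have hml := lenle hl (by omega)
  rcases Nat.lt_or_ge k (l.headD 0) with hkA | hkA
  · rw [doubledP, List.getD_append_right _ _ _ _ (by simpa using hk)]
    have hlt : k - l.length < l.headD 0 - l.length := by omega
    rw [List.getD_eq_getElem _ 0 (by simpa using hlt)]
    simp only [List.getElem_map, List.getElem_range]
    rw [Q]
    congr 2
    funext c
    simp only [List.length_map, List.length_range]
    have : l.length + (k - l.length) + 1 = k + 1 := by omega
    rw [this]
  · rw [List.getD_eq_default _ 0 (by rw [len_doubledP hl]; omega)]
    rw [Q]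
    symm
    rw [List.length_eq_zero_iff, List.filter_eq_nil_iff]
    intro c hc
    simp only [List.mem_range] at hc
    have := getD_le_head hl c hc
    simp only [decide_eq_true_eq]
    omega

lemma claim1 (hl : IsStrictList l) (k : ℕ) (hq : Q l k < l.length) :
    k + 1 > Q l k + l.getD (Q l k) 0 := by
  by_contra h
  push_neg at h
  have hall : ∀ c ∈ List.range (Q l k + 1), (fun c => decide (k + 1 ≤ c + l.getD c 0)) c := by
    intro c hc
    simp only [List.mem_range] at hc
    simp only [decide_eq_true_eq]
    exact Q_down hl k (Q l k) c hq (by omega) h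
  have h1 : (List.range (Q l k + 1)).countP (fun c => decide (k + 1 ≤ c + l.getD c 0))
      = Q l k + 1 := by
    rw [List.countP_eq_length.mpr hall, List.length_range]
  have h2 : Q l k + 1 ≤ Q l k := by
    conv_rhs => rw [Q, ← List.countP_eq_length_filter]
    rw [← h1]
    have : l.length = (Q l k + 1) + (l.length - (Q l k + 1)) := by omega
    rw [this, List.range_add (n := Q l k + 1) (m := l.length - (Q l k + 1)), List.countP_append]
    omega
  omega

lemma claim2 (hl : IsStrictList l) (k : ℕ) (hq : 1 ≤ Q l k) :
    k + 1 ≤ (Q l k - 1) + l.getD (Q l k - 1) 0 := by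
  by_contra h
  push_neg at h
  have hqm := Q_le (l := l) k
  have hnone : ∀ c ∈ (List.range (l.length - (Q l k - 1))).map ((Q l k - 1) + ·),
      ¬ (fun c => decide (k + 1 ≤ c + l.getD c 0)) c = true := by
    intro c hc
    simp only [List.mem_map, List.mem_range] at hc
    obtain ⟨t, ht, rfl⟩ := hc
    simp only [decide_eq_true_eq]
    intro hcon
    have hclen : Q l k - 1 + t < l.length := by omega
    exact absurd (Q_down hl k _ (Q l k - 1) hclen (by omega) hcon) (by omega)
  have h2 : Q l k ≤ Q l k - 1 := by
    conv_lhs => rw [Q, ← List.countP_eq_length_filter]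
    have : l.length = (Q l k - 1) + (l.length - (Q l k - 1)) := by omega
    rw [this, List.range_add (n := Q l k - 1) (m := l.length - (Q l k - 1)), List.countP_append]
    have hz : (List.map (fun x => Q l k - 1 + x) (List.range (l.length - (Q l k - 1)))).countP
        (fun c => decide (k + 1 ≤ c + l.getD c 0)) = 0 := by
      rw [List.countP_eq_zero]
      exact hnone
    rw [hz]
    have := List.countP_le_length (l := List.range (Q l k - 1))
      (p := fun c => decide (k + 1 ≤ c + l.getD c 0))
    simp only [List.length_range] at this
    omega
  omega

/-- The core no-collision lemma. -/
lemma core (hl : IsStrictList l) (k j : ℕ) (hk : l.length ≤ k) (hj : j < l.length) :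
    l.getD j 0 + Q l k ≠ k + 1 := by
  intro heq
  have hqm := Q_le (l := l) k
  rcases Nat.eq_zero_or_pos (Q l k) with h0 | h0
  · have : ¬ (k + 1 ≤ 0 + l.getD 0 0) := by
      intro hcon
      have hmem : 0 ∈ (List.range l.length).filter (fun c => decide (k + 1 ≤ c + l.getD c 0)) := by
        rw [List.mem_filter]
        exact ⟨List.mem_range.mpr (by omega), by simpa using hcon⟩
      have := List.length_pos_of_mem hmem
      rw [Q] at h0
      omega
    have hle := monoSum hl 0 j (by omega) hj
    omega
  rcases Nat.lt_or_ge (Q l k) l.length with hqlt | hqge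
  · have hc1 := claim1 hl k hqlt
    have hc2 := claim2 hl k h0
    have hjq : j < Q l k := by
      by_contra hge
      push_neg at hge
      have := monoSum hl (Q l k) j hge hj
      omega
    have := monoSum hl j (Q l k - 1) (by omega) (by omega)
    omega
  · have hqem : Q l k = l.length := by omega
    have hc2 := claim2 hl k h0
    have := monoSum hl j (Q l k - 1) (by omega) (by omega)
    omega

lemma mem_le_head (hl : IsStrictList l) {a : ℕ} (ha : a ∈ l) : 0 < a ∧ a ≤ l.headD 0 := by
  obtain ⟨i, hi, rfl⟩ := List.mem_iff_getElem.mp ha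
  rw [← List.getD_eq_getElem l 0 hi]
  exact ⟨posD hl i hi, by have := getD_le_head hl i hi; omega⟩

lemma nodup_l (hl : IsStrictList l) : l.Nodup := by
  have hp : l.Pairwise (· > ·) := List.isChain_iff_pairwise.mp hl.1
  exact hp.imp (fun h => by omega)

lemma S_eq (hl : IsStrictList l) (N : ℕ) (hm : l.length ≤ N) (hA : l.headD 0 ≤ N) :
    ((List.range (N - l.length)).map
        (fun t => Q l (l.length + t) + (N - 1 - (l.length + t))) : Multiset ℕ)
      + (l.map (fun b => N - b) : Multiset ℕ) = Multiset.range N := by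
  set g : ℕ → ℕ := fun t => Q l (l.length + t) + (N - 1 - (l.length + t)) with hg
  -- strict decrease of g
  have hgd : ∀ t t', t < t' → t' < N - l.length → g t' < g t := by
    intro t t' htt ht'
    have hQ := Q_anti (l := l) (l.length + t) (l.length + t') (by omega)
    have h1 : N - 1 - (l.length + t') < N - 1 - (l.length + t) := by omega
    simp only [hg]
    omega
  have hgmem : ∀ t, t < N - l.length → g t < N := by
    intro t ht
    have := Q_le (l := l) (l.length + t)
    simp only [hg]
    omega
  have hnd1 : ((List.range (N - l.length)).map g).Nodup := by
    apply List.Nodup.map_on _ List.nodup_range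
    intro x hx y hy hxy
    simp only [List.mem_range] at hx hy
    rcases Nat.lt_trichotomy x y with h | h | h
    · exact absurd hxy (by have := hgd x y h hy; omega)
    · exact h
    · exact absurd hxy (by have := hgd y x h hx; omega)
  have hnd2 : (l.map (fun b => N - b)).Nodup := by
    apply List.Nodup.map_on _ (nodup_l hl)
    intro x hx y hy hxy
    have h1 := mem_le_head hl hx
    have h2 := mem_le_head hl hy
    omega
  have hdisj : Disjoint (((List.range (N - l.length)).map g : List ℕ) : Multiset ℕ)
      ((l.map (fun b => N - b) : List ℕ) : Multiset ℕ) := by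
    rw [Multiset.disjoint_left]
    intro x hx1 hx2
    simp only [Multiset.mem_coe, List.mem_map, List.mem_range] at hx1 hx2
    obtain ⟨t, ht, hxt⟩ := hx1
    obtain ⟨b, hb, hxb⟩ := hx2
    obtain ⟨j, hj, rfl⟩ := List.mem_iff_getElem.mp hb
    rw [← List.getD_eq_getElem l 0 hj] at hxb
    have hble := mem_le_head hl hb
    rw [← List.getD_eq_getElem l 0 hj] at hble
    have hco := core hl (l.length + t) j (by omega) hj
    simp only [hg] at hxt
    have hQl := Q_le (l := l) (l.length + t)
    omega
  have hnodup : (((List.range (N - l.length)).map g : List ℕ) : Multiset ℕ)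
      + ((l.map (fun b => N - b) : List ℕ) : Multiset ℕ) |>.Nodup := by
    rw [Multiset.nodup_add]
    exact ⟨Multiset.coe_nodup.mpr hnd1, Multiset.coe_nodup.mpr hnd2, hdisj⟩
  apply Multiset.eq_of_le_of_card_le
  · rw [Multiset.le_iff_subset hnodup]
    intro x hx
    rw [Multiset.mem_range]
    rw [Multiset.mem_add] at hx
    rcases hx with hx | hx
    · simp only [Multiset.mem_coe, List.mem_map, List.mem_range] at hx
      obtain ⟨t, ht, rfl⟩ := hx
      exact hgmem t ht
    · simp only [Multiset.mem_coe, List.mem_map] at hx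
      obtain ⟨b, hb, rfl⟩ := hx
      have := mem_le_head hl hb
      omega
  · simp only [Multiset.card_add, Multiset.coe_card, List.length_map, List.length_range,
      Multiset.card_range]
    omega

lemma countP_range_eq_one {d i : ℕ} (hi : i < d) :
    (List.range d).countP (fun x => decide (x % d = i)) = 1 := by
  have h1 : (List.range d).countP (fun x => decide (x % d = i))
      = (List.range d).countP (fun x => x == i) := by
    apply List.countP_congr
    intro x hx
    simp only [List.mem_range] at hx
    simp [Nat.mod_eq_of_lt hx]
  rw [h1, ← List.count]
  exact List.count_eq_one_of_mem (List.nodup_range (n := d)) (List.mem_range.mpr hi)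

lemma countP_range_mod {d i : ℕ} (hi : i < d) (q : ℕ) :
    (List.range (d * q)).countP (fun x => decide (x % d = i)) = q := by
  induction q with
  | zero => simp
  | succ n ih =>
    have : d * (n + 1) = d * n + d := by ring
    rw [this, List.range_add (n := d*n) (m := d), List.countP_append, ih, List.countP_map]
    have : (List.range d).countP ((fun x => decide (x % d = i)) ∘ (fun x => d * n + x))
        = (List.range d).countP (fun x => decide (x % d = i)) := by
      apply List.countP_congr
      intro x _
      simp only [Function.comp_apply]
      rw [Nat.mul_add_mod d n x]
    rw [this, countP_range_eq_one hi]

lemma mod_sub_iff {d N a i : ℕ} (hd : 0 < d) (hdvd : d ∣ N) (ha : a ≤ N) (hi : i < d) :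
    ((N - a) % d = i) ↔ (a % d = (d - i) % d) := by
  obtain ⟨k, rfl⟩ := hdvd
  have hu : (d * k - a) % d < d := Nat.mod_lt _ hd
  have hr : a % d < d := Nat.mod_lt a hd
  have hsum : ((d * k - a) % d + a % d) % d = 0 := by
    have h1 : (d * k - a) + a = d * k := by omega
    have h2 : ((d * k - a) + a) % d = 0 := by rw [h1]; exact Nat.mul_mod_right d k
    rw [Nat.add_mod] at h2
    exact h2
  have hcase : (d * k - a) % d + a % d = 0 ∨ (d * k - a) % d + a % d = d := by
    rcases Nat.lt_or_ge ((d * k - a) % d + a % d) d with h | h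
    · left; rwa [Nat.mod_eq_of_lt h] at hsum
    · right
      rw [Nat.mod_eq_sub_mod h, Nat.mod_eq_of_lt (by omega)] at hsum
      omega
  have hdi : (d - i) % d = if i = 0 then 0 else d - i := by
    split
    · next h => subst h; simp
    · next h => exact Nat.mod_eq_of_lt (by omega)
  rw [hdi]
  split_ifs <;> omega

lemma map_getD_range : (List.range l.length).map (fun k => l.getD k 0) = l := by
  apply List.ext_getElem
  · simp
  · intro i h1 h2
    simp only [List.getElem_map, List.getElem_range]
    exact (List.getD_eq_getElem l 0 h2).symm ▸ rfl

lemma count_formula (hl : IsStrictList l) {d i : ℕ} (hd : 0 < d) (hi : i < d) :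
    beadCountL d (doubledP l) i + l.countP (fun a => decide (a % d = (d - i) % d))
      = l.countP (fun a => decide (a % d = i)) + (l.headD 0 + d - 1) / d := by
  set A := l.headD 0 with hA
  set m := l.length with hm
  set c := (A + d - 1) / d with hc
  set N := d * c with hN
  have hdvd : d ∣ N := ⟨c, rfl⟩
  have hAN : A ≤ N := by
    have h1 : d * c + (A + d - 1) % d = A + d - 1 := by
      rw [hc]; exact Nat.div_add_mod _ _
    have h2 : (A + d - 1) % d < d := Nat.mod_lt _ hd
    omega
  have hmN : m ≤ N := by
    rcases Nat.eq_zero_or_pos m with h | h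
    · omega
    · have := lenle hl (by omega)
      omega
  have hbead : beadCountL d (doubledP l) i
      = ((List.range N).map (fun k => (doubledP l).getD k 0 + (N - 1 - k))).countP
          (fun v => decide (v % d = i)) := by
    rw [beadCountL, len_doubledP hl, ← List.countP_eq_length_filter, betaList]
    rfl
  have hsplit : List.range N = List.range m ++ (List.range (N - m)).map (m + ·) := by
    rw [← List.range_add (n := m) (m := N - m)]
    congr 1
    omega
  rw [hbead, hsplit, List.map_append, List.countP_append, List.map_map]
  -- first block
  have hfirst : ((List.range m).map (fun k => (doubledP l).getD k 0 + (N - 1 - k))).countP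
      (fun v => decide (v % d = i)) = l.countP (fun a => decide (a % d = i)) := by
    rw [List.countP_map]
    have h1 : ∀ k ∈ List.range m,
        ((fun v => decide (v % d = i)) ∘ (fun k => (doubledP l).getD k 0 + (N - 1 - k))) k
          = (fun k => decide (l.getD k 0 % d = i)) k := by
      intro k hk
      simp only [List.mem_range] at hk
      simp only [Function.comp_apply]
      rw [getD_doubledP_lt k hk]
      have h2 : l.getD k 0 + k + 1 + (N - 1 - k) = d * c + l.getD k 0 := by omega
      rw [h2, Nat.mul_add_mod d c (l.getD k 0)]
    rw [List.countP_congr (by intro x hx; rw [h1 x hx])]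
    conv_rhs => rw [← map_getD_range (l := l)]
    rw [List.countP_map]
    rfl
  rw [hfirst]
  -- second block
  have hsecond : ((List.range (N - m)).map
        ((fun k => (doubledP l).getD k 0 + (N - 1 - k)) ∘ (m + ·))).countP
      (fun v => decide (v % d = i))
      = ((List.range (N - m)).map
          (fun t => Q l (m + t) + (N - 1 - (m + t)))).countP (fun v => decide (v % d = i)) := by
    rw [List.countP_map, List.countP_map]
    apply List.countP_congr
    intro t ht
    simp only [Function.comp_apply, getD_doubledP_ge hl (m + t) (by omega)]
  rw [hsecond]
  -- use S_eq
  have hS := congrArg (Multiset.countP (fun v => v % d = i)) (S_eq hl N hmN hAN)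
  rw [Multiset.countP_add] at hS
  have hrange : (Multiset.range N) = ((List.range N : List ℕ) : Multiset ℕ) := rfl
  rw [hrange, Multiset.coe_countP, Multiset.coe_countP, Multiset.coe_countP] at hS
  beta_reduce at hS
  have hrangecnt : (List.range N).countP (fun b => decide (b % d = i)) = c :=
    countP_range_mod hi c
  rw [hrangecnt] at hS
  have hsub : (l.map (fun b => N - b)).countP (fun b => decide (b % d = i))
      = l.countP (fun a => decide (a % d = (d - i) % d)) := by
    rw [List.countP_map]
    apply List.countP_congr
    intro a ha
    simp only [Function.comp_apply, decide_eq_true_eq]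
    have hle := mem_le_head hl ha
    constructor <;> intro h
    · exact (mod_sub_iff hd hdvd (by omega) hi).mp (by simpa using h)
    · simpa using (mod_sub_iff hd hdvd (by omega) hi).mpr h
  rw [hsub] at hS
  simp only [← hm] at hS
  omega

lemma inv_mod {d i : ℕ} (hd : 0 < d) (hi : i < d) : (d - (d - i) % d) % d = i := by
  rcases Nat.eq_zero_or_pos i with rfl | h
  · simp [Nat.mod_self]
  · rw [Nat.mod_eq_of_lt (show d - i < d by omega), show d - (d - i) = i by omega,
      Nat.mod_eq_of_lt hi]

lemma pair_sum (hl : IsStrictList l) {d i : ℕ} (hd : 0 < d) (hi : i < d) :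
    beadCountL d (doubledP l) i + beadCountL d (doubledP l) ((d - i) % d)
      = 2 * ((l.headD 0 + d - 1) / d) := by
  have hi' : (d - i) % d < d := Nat.mod_lt _ hd
  have F1 := count_formula hl hd hi
  have F2 := count_formula hl hd hi'
  rw [inv_mod hd hi] at F2
  omega
end
/-- on the minimally normalized `d`-abacus of `D(λ)`, the bead counts
satisfy `xᵢ + x_{d-i mod d} = xⱼ + x_{d-j mod d}` for all `i, j < d`. -/
theorem beadCount_symm (d : ℕ) (hd : Odd d) (h3 : 3 ≤ d) (l : List ℕ) (hl : IsStrictList l) :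
    ∀ i < d, ∀ j < d,
      beadCountL d (doubledP l) i + beadCountL d (doubledP l) ((d - i) % d)
        = beadCountL d (doubledP l) j + beadCountL d (doubledP l) ((d - j) % d) := by
  intro i hi j hj
  rw [pair_sum hl (by omega) hi, pair_sum hl (by omega) hj]

end BarPartitions
end

section
/- Let λ be a strict partition with doubled partition D(λ). For every hook z of D(λ) whose corresponding cell lies strictly above the diagonal in a row corresponding to a part of λ but is not itself on the diagonal or a 'part hook' (i.e. z ∈ B(D(λ)), a bar that is not a part), there is a hook z* of D(λ) below the diagonal with h(z) = h(z*); moreover if the hand node of z has d-residue i and the foot node has d-residue j+1 mod d, then the hand node of z* has d-residue (d-j) mod d and its foot node has d-residue (d-i)+1 mod d, for any odd d ≥ 3. -/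
namespace BarPartitions

/-- Quantitative strict decrease. -/
lemma strict_le {l : List ℕ} (hl : IsStrictList l) {i j : ℕ} (hij : i ≤ j) (hj : j < l.length) :
    l.getD j 0 + (j - i) ≤ l.getD i 0 := by
  induction j, hij using Nat.le_induction with
  | base => simp
  | succ j hij ih =>
    have hj' : j < l.length := by omega
    have step : l.getD (j+1) 0 < l.getD j 0 := by
      rw [List.getD_eq_getElem _ _ hj, List.getD_eq_getElem _ _ hj']
      have := List.isChain_iff_getElem.mp hl.1 j (by omega)
      simpa using this
    have := ih hj'
    omega

lemma pos_get {l : List ℕ} (hl : IsStrictList l) {i : ℕ} (hi : i < l.length) :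
    0 < l.getD i 0 := by
  rw [List.getD_eq_getElem _ _ hi]
  exact hl.2 _ (l.getElem_mem hi)

/-- `a c ≥ m - c`. -/
lemma ge_length_sub {l : List ℕ} (hl : IsStrictList l) {c : ℕ} (hc : c < l.length) :
    l.length - c ≤ l.getD c 0 := by
  have h1 := strict_le hl (i := c) (j := l.length - 1) (by omega) (by omega)
  have h2 := pos_get hl (i := l.length - 1) (by omega)
  omega

lemma getD_map_range (f : ℕ → ℕ) {n i : ℕ} (h : i < n) :
    ((List.range n).map f).getD i 0 = f i := by
  rw [List.getD_eq_getElem _ _ (by simpa using h)]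
  simp

lemma headD_eq_getD (l : List ℕ) (h : 0 < l.length) : l.headD 0 = l.getD 0 0 := by
  cases l with
  | nil => simp at h
  | cons a t => rfl

lemma doubledP_length {l : List ℕ} (hl : IsStrictList l) (hne : 0 < l.length) :
    (doubledP l).length = l.getD 0 0 := by
  have hm : l.length ≤ l.getD 0 0 := by
    have := ge_length_sub hl (c := 0) hne; omega
  rw [doubledP, List.length_append, List.length_map, List.length_range, List.length_map,
    List.length_range, headD_eq_getD l hne]
  omega

lemma doubledP_getD_lt {l : List ℕ} {i : ℕ} (hi : i < l.length) :
    (doubledP l).getD i 0 = l.getD i 0 + i + 1 := by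
  rw [doubledP, List.getD_append _ _ _ _ (by simpa using hi), getD_map_range _ hi]

lemma doubledP_getD_ge {l : List ℕ} (hl : IsStrictList l) (hne : 0 < l.length) {c : ℕ}
    (hc : l.length < c) (hc2 : c ≤ l.getD 0 0) :
    (doubledP l).getD (c - 1) 0 =
      ((List.range l.length).filter (fun i => decide (c ≤ i + l.getD i 0))).length := by
  rw [doubledP, List.getD_append_right _ _ _ _ (by simpa using by omega : _ ≤ c - 1)]
  simp only [List.length_map, List.length_range]
  rw [headD_eq_getD l hne]
  rw [getD_map_range _ (by omega)]
  congr 1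
  apply List.filter_congr
  intro x hx
  simp only [decide_eq_decide]
  omega


lemma length_filter_range_down (m : ℕ) (q : ℕ → Bool)
    (hq : ∀ x y, x ≤ y → y < m → q y = true → q x = true) {c : ℕ} (hc : c < m) :
    c < ((List.range m).filter q).length ↔ q c = true := by
  constructor
  · intro h
    by_contra hqc
    have hsplit : m = c + (m - c) := by omega
    rw [hsplit, List.range_add, List.filter_append] at h
    have h2 : ((List.range (m - c)).map (fun x => c + x)).filter q = [] := by
      rw [List.filter_eq_nil_iff]
      intro a ha
      simp only [List.mem_map, List.mem_range] at ha
      obtain ⟨x, _, rfl⟩ := ha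
      intro hqa
      exact hqc (hq c (c + x) (by omega) (by omega) hqa)
    rw [h2] at h
    simp only [List.length_append, List.length_nil] at h
    have := List.length_filter_le q (List.range c)
    simp at this
    omega
  · intro h
    have hsub : (List.range (c+1)).Sublist (List.range m) := List.range_sublist.mpr (by omega)
    have hfil : (List.range (c+1)).filter q = List.range (c+1) := by
      rw [List.filter_eq_self]
      intro a ha
      exact hq a c (by simpa [Nat.lt_succ_iff] using ha) hc h
    have := (hsub.filter q).length_le
    rw [hfil] at this
    simp at this
    omega

lemma length_filter_range_lt (N K : ℕ) (h : K ≤ N) :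
    ((List.range N).filter (fun k => decide (k < K))).length = K := by
  have hsplit : N = K + (N - K) := by omega
  rw [hsplit, List.range_add, List.filter_append]
  have h1 : (List.range K).filter (fun k => decide (k < K)) = List.range K := by
    rw [List.filter_eq_self]; intro a ha; simpa using List.mem_range.mp ha
  have h2 : ((List.range (N - K)).map (fun x => K + x)).filter (fun k => decide (k < K)) = [] := by
    rw [List.filter_eq_nil_iff]
    intro a ha
    simp only [List.mem_map, List.mem_range] at ha
    obtain ⟨x, _, rfl⟩ := ha
    simp
  rw [h1, h2]
  simp

/-- The second-block entries are downward closed in the column index. -/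
lemma fmono {l : List ℕ} (hl : IsStrictList l) {x y : ℕ} (hxy : x ≤ y) (hy : y < l.length) :
    y + l.getD y 0 ≤ x + l.getD x 0 := by
  have := strict_le hl hxy hy
  omega

lemma colLen_doubledP_lt {l : List ℕ} (hl : IsStrictList l) {c : ℕ} (hc : c < l.length) :
    colLen (doubledP l) c = l.getD c 0 + c := by
  have hne : 0 < l.length := by omega
  have hmc : l.length - c ≤ l.getD c 0 := ge_length_sub hl hc
  have hc0 : l.getD c 0 + c ≤ l.getD 0 0 := by
    have := strict_le hl (Nat.zero_le c) hc; omega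
  rw [colLen, doubledP, List.filter_append, List.length_append]
  have hA : ((List.range l.length).map (fun i => l.getD i 0 + i + 1)).filter
      (fun p => decide (c < p)) = (List.range l.length).map (fun i => l.getD i 0 + i + 1) := by
    rw [List.filter_eq_self]
    intro a ha
    simp only [List.mem_map, List.mem_range] at ha
    obtain ⟨i, hi, rfl⟩ := ha
    simp only [decide_eq_true_eq]
    rcases Nat.lt_or_ge i c with h | h
    · have := strict_le hl (Nat.le_of_lt h) hc
      have := pos_get hl hc
      omega
    · omega
  rw [hA, List.length_map, List.length_range]
  rw [List.filter_map, List.length_map, headD_eq_getD l hne]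
  have hB : (List.range (l.getD 0 0 - l.length)).filter
      ((fun p => decide (c < p)) ∘ (fun k =>
        ((List.range l.length).filter (fun c' => decide (l.length + k + 1 ≤ c' + l.getD c' 0))).length))
      = (List.range (l.getD 0 0 - l.length)).filter (fun k => decide (k < l.getD c 0 + c - l.length)) := by
    apply List.filter_congr
    intro k hk
    simp only [Function.comp_apply, decide_eq_decide]
    rw [length_filter_range_down l.length _ (fun x y hxy hy hqy => by
        simp only [decide_eq_true_eq] at *
        exact le_trans hqy (fmono hl hxy hy)) hc]
    simp only [decide_eq_true_eq]
    omega
  rw [hB, length_filter_range_lt _ _ (by omega)]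
  omega

lemma colLen_doubledP_gt {l : List ℕ} (hl : IsStrictList l) (hne : 0 < l.length) {c : ℕ}
    (hc : l.length < c) :
    colLen (doubledP l) c =
      ((List.range l.length).filter (fun i => decide (c ≤ i + l.getD i 0))).length := by
  rw [colLen, doubledP, List.filter_append, List.length_append]
  have hB : ((List.range (l.headD 0 - l.length)).map (fun k =>
      ((List.range l.length).filter (fun c' => decide (l.length + k + 1 ≤ c' + l.getD c' 0))).length)).filter
      (fun p => decide (c < p)) = [] := by
    rw [List.filter_eq_nil_iff]
    intro a ha
    simp only [List.mem_map, List.mem_range] at ha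
    obtain ⟨k, _, rfl⟩ := ha
    have := List.length_filter_le (fun c' => decide (l.length + k + 1 ≤ c' + l.getD c' 0))
      (List.range l.length)
    simp only [List.length_range] at this
    simp only [decide_eq_true_eq]
    omega
  rw [hB, List.length_nil, List.filter_map, List.length_map, Nat.add_zero]
  congr 1
  apply List.filter_congr
  intro i hi
  simp only [List.mem_range] at hi
  simp only [Function.comp_apply, decide_eq_decide]
  omega

/-- Column `c` of `D(λ)` has more than `r` cells whenever cell `(r,c)` is in the diagram. -/
lemma lt_colLen_doubledP {l : List ℕ} (hl : IsStrictList l) {r c : ℕ} (hr : r < l.length)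
    (hc : c < (doubledP l).getD r 0) : r < colLen (doubledP l) c := by
  rcases Nat.lt_or_ge c l.length with h | h
  · rw [colLen_doubledP_lt hl h]
    rw [doubledP_getD_lt hr] at hc
    rcases Nat.lt_or_ge r c with h2 | h2
    · have := strict_le hl (Nat.le_of_lt h2) h
      have := ge_length_sub hl h
      omega
    · have := strict_le hl h2 hr
      have := pos_get hl hr
      omega
  · have hcl : l.length < c ∨ l.length = c := by omega
    rw [doubledP_getD_lt hr] at hc
    have hrc : c ≤ r + l.getD r 0 := by omega
    rcases hcl with h | h
    · rw [colLen_doubledP_gt hl (by omega) h]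
      rw [length_filter_range_down l.length _ (fun x y hxy hy hqy => by
        simp only [decide_eq_true_eq] at *
        exact le_trans hqy (fmono hl hxy hy)) hr]
      simp only [decide_eq_true_eq]
      omega
    · rw [colLen, doubledP, List.filter_append, List.length_append]
      have hA : ((List.range l.length).map (fun i => l.getD i 0 + i + 1)).filter
          (fun p => decide (c < p)) = (List.range l.length).map (fun i => l.getD i 0 + i + 1) := by
        rw [List.filter_eq_self]
        intro a ha
        simp only [List.mem_map, List.mem_range] at ha
        obtain ⟨i, hi, rfl⟩ := ha
        have := ge_length_sub hl hi
        simp only [decide_eq_true_eq]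
        omega
      rw [hA, List.length_map, List.length_range]
      omega

/-- every hook of `D(λ)` at a cell `(r, c)` with `r < c`, `r < m`, `c ≠ m`
(a bar of `λ` that is not a part nor a diagonal hook) has a counterpart below the diagonal
of the same length, whose hand/foot `d`-residues are as stated: if the hand residue is `i`
and the foot residue is `j + 1`, then the counterpart has hand residue `-j = d - j` and
foot residue `-i + 1 = (d - i) + 1` (mod `d`). -/
theorem conjugate_hook (d : ℕ) (hd : Odd d) (h3 : 3 ≤ d) (l : List ℕ) (hl : IsStrictList l)
    (r c : ℕ) (hr : r < l.length) (hrc : r < c) (hcm : c ≠ l.length)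
    (hc : c < (doubledP l).getD r 0) :
    ∃ r' c', r' < (doubledP l).length ∧ c' < (doubledP l).getD r' 0 ∧ c' < r' ∧
      hookLen (doubledP l) r' c' = hookLen (doubledP l) r c ∧
      ∀ i j : ZMod d, handRes d (doubledP l) r = i → footRes d (doubledP l) c = j + 1 →
        handRes d (doubledP l) r' = -j ∧ footRes d (doubledP l) c' = -i + 1 := by
  have hm : 0 < l.length := by omega
  have hDr : (doubledP l).getD r 0 = l.getD r 0 + r + 1 := doubledP_getD_lt hr
  have hc' : c < l.getD r 0 + r + 1 := hDr ▸ hc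
  have hlen : (doubledP l).length = l.getD 0 0 := doubledP_length hl hm
  have ha0 : l.getD r 0 + r ≤ l.getD 0 0 := by
    have := strict_le hl (Nat.zero_le r) hr; omega
  have hm0 : l.length ≤ l.getD 0 0 := by
    have := ge_length_sub hl hm; omega
  have colr : colLen (doubledP l) r = l.getD r 0 + r := colLen_doubledP_lt hl hr
  have hpr : 0 < l.getD r 0 := pos_get hl hr
  rcases Nat.lt_or_ge c l.length with h | hge
  · -- Case c < m : take (r', c') = (c, r)
    have hcar : c < l.getD r 0 + r := by
      have := ge_length_sub hl hr; omega
    have colc : colLen (doubledP l) c = l.getD c 0 + c := colLen_doubledP_lt hl h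
    have hDc : (doubledP l).getD c 0 = l.getD c 0 + c + 1 := doubledP_getD_lt h
    refine ⟨c, r, by omega, by rw [hDc]; omega, hrc, ?_, ?_⟩
    · rw [hookLen, hookLen, hDc, hDr, colc, colr]
      omega
    · intro i j hi hj
      simp only [handRes, footRes] at hi hj ⊢
      rw [colc] at hj
      rw [hDr] at hi
      rw [colr, hDc]
      constructor
      · push_cast at hj ⊢
        linear_combination -hj
      · push_cast at hi ⊢
        linear_combination -hi
  · -- Case c > m : take (r', c') = (c - 1, r)
    have h : l.length < c := by omega
    have hca0 : c ≤ l.getD 0 0 := by omega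
    have hgetc1 := doubledP_getD_ge hl hm h hca0
    have hcolc := colLen_doubledP_gt hl hm h
    have heq : (doubledP l).getD (c - 1) 0 = colLen (doubledP l) c := hgetc1.trans hcolc.symm
    have hrcol : r < colLen (doubledP l) c := lt_colLen_doubledP hl hr hc
    refine ⟨c - 1, r, by omega, by rw [heq]; exact hrcol, by omega, ?_, ?_⟩
    · rw [hookLen, hookLen, heq, hDr, colr]
      omega
    · intro i j hi hj
      simp only [handRes, footRes] at hi hj ⊢
      rw [hDr] at hi
      rw [colr, heq]
      constructor
      · push_cast [Nat.cast_sub (show 1 ≤ c by omega)] at hj ⊢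
        linear_combination -hj
      · push_cast at hi ⊢
        linear_combination -hi

end BarPartitions
end

section
/- Let d ≥ 3 be odd and λ a strict partition with d̄-core c̄_d(λ). Then the multiset of bar lengths of c̄_d(λ) is a sub-multiset of the multiset of bar lengths of λ: B(c̄_d(λ)) ⊆ B(λ). -/
namespace BarPartitions

set_option maxHeartbeats 1000000


/-- Signed beta-set membership: `W(X) = X ∪ { -c : c ∉ X }`. -/
def memW (X : Finset ℕ) (w : ℤ) : Prop := (0 < w ∧ w.toNat ∈ X) ∨ (w ≤ 0 ∧ (-w).toNat ∉ X)

instance (X : Finset ℕ) (w : ℤ) : Decidable (memW X w) := by unfold memW; infer_instance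

lemma memW_pos {X : Finset ℕ} {w : ℤ} (h : 0 < w) : memW X w ↔ w.toNat ∈ X := by
  unfold memW; constructor
  · rintro (⟨_, h2⟩ | ⟨h1, _⟩) <;> [exact h2; omega]
  · intro h2; exact Or.inl ⟨h, h2⟩

lemma memW_nonpos {X : Finset ℕ} {w : ℤ} (h : w ≤ 0) : memW X w ↔ (-w).toNat ∉ X := by
  unfold memW; constructor
  · rintro (⟨h1, _⟩ | ⟨_, h2⟩) <;> [omega; exact h2]
  · intro h2; exact Or.inr ⟨h, h2⟩

lemma memW_natCast {X : Finset ℕ} {n : ℕ} (hn : 0 < n) : memW X (n : ℤ) ↔ n ∈ X := by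
  rw [memW_pos (by exact_mod_cast hn)]; simp

lemma memW_neg_natCast {X : Finset ℕ} (n : ℕ) : memW X (-(n : ℤ)) ↔ n ∉ X := by
  rw [memW_nonpos (by omega)]; simp



lemma count1 (X : Finset ℕ) (v a : ℕ) (hv : 0 < v) :
    Multiset.count v (((Multiset.range a).map (· + 1)).filter (fun h => a - h ∉ X))
      = if v ≤ a ∧ a - v ∉ X then 1 else 0 := by
  rw [Multiset.count_filter]
  have hinj : Function.Injective (· + 1 : ℕ → ℕ) := fun x y h => by simpa using h
  have h1 : Multiset.count v ((Multiset.range a).map (· + 1)) = if v ≤ a then 1 else 0 := by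
    have h2 := Multiset.count_map_eq_count' _ (Multiset.range a) hinj (v - 1)
    simp only [show v - 1 + 1 = v by omega] at h2
    rw [h2, Multiset.count_eq_of_nodup (Multiset.nodup_range a)]
    simp only [Multiset.mem_range]
    split_ifs <;> omega
  by_cases hX : a - v ∉ X
  · simp only [hX, if_true, h1]; split_ifs with h h' <;> first | rfl | tauto | omega
  · simp only [hX, if_false]
    split_ifs with h <;> tauto
lemma count2 (X : Finset ℕ) (v a : ℕ) (h0 : 0 ∉ X) :
    Multiset.count v ((X.filter (fun b => b < a)).val.map (fun b => a + b))
      = if a ≤ v ∧ v - a ∈ X ∧ v - a < a then 1 else 0 := by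
  rw [Multiset.count_map]
  have e1 : Multiset.filter (fun b => v = a + b) (X.filter (fun b => b < a)).val
       = ((X.filter (fun b => b < a)).filter (fun b => v = a + b)).val := by
    simp [Finset.filter_val]
  rw [e1]
  have e2 : (X.filter (fun b => b < a)).filter (fun b => v = a + b)
       = if a ≤ v ∧ v - a ∈ X ∧ v - a < a then {v - a} else ∅ := by
    split_ifs with h
    · ext b
      simp only [Finset.mem_filter, Finset.mem_singleton]
      constructor
      · rintro ⟨⟨hbX, hba⟩, he⟩; omega
      · rintro rfl; exact ⟨⟨h.2.1, h.2.2⟩, by omega⟩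
    · ext b
      simp only [Finset.mem_filter, Finset.notMem_empty, iff_false, not_and]
      rintro ⟨hbX, hba⟩ he
      have hb0 : 0 < b := by rcases Nat.eq_zero_or_pos b with rfl | h <;> [exact absurd hbX h0; exact h]
      exact h ⟨by omega, by rw [show v - a = b by omega]; exact hbX, by omega⟩
  rw [e2]; split_ifs <;> simp

lemma countB (X : Finset ℕ) (v : ℕ) (h0 : 0 ∉ X) (hv : 0 < v) :
    Multiset.count v (barMultisetF X)
      = (X.filter (fun a => v ≤ a ∧ a - v ∉ X)).card
      + (X.filter (fun a => a ≤ v ∧ v - a ∈ X ∧ v - a < a)).card := by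
  unfold barMultisetF
  rw [Multiset.count_add, Multiset.count_bind, Multiset.count_bind]
  rw [Finset.card_filter, Finset.card_filter]
  have e1 : ∀ m : Multiset ℕ, (m.map (fun a => Multiset.count v
      (((Multiset.range a).map (· + 1)).filter (fun h => a - h ∉ X)))).sum
      = (m.map (fun a => if v ≤ a ∧ a - v ∉ X then 1 else 0)).sum := by
    intro m; congr 1; exact Multiset.map_congr rfl (fun a _ => count1 X v a hv)
  have e2 : ∀ m : Multiset ℕ, (m.map (fun a => Multiset.count v
      ((X.filter (fun b => b < a)).val.map (fun b => a + b)))).sum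
      = (m.map (fun a => if a ≤ v ∧ v - a ∈ X ∧ v - a < a then 1 else 0)).sum := by
    intro m; congr 1; exact Multiset.map_congr rfl (fun a _ => count2 X v a h0)
  rw [e1, e2]; rfl


noncomputable def Lset (X : Finset ℕ) (v : ℕ) (M : ℤ) : Finset ℤ :=
  (Finset.Icc (-M) M).filter (fun w => memW X w ∧ memW X ((v:ℤ) - w) ∧ w < (v:ℤ) - w)

noncomputable def Hset (X : Finset ℕ) (v : ℕ) (M : ℤ) : Finset ℤ :=
  (Finset.Icc (-M) M).filter (fun w => memW X w ∧ memW X ((v:ℤ) - w))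

lemma card_Lset (X : Finset ℕ) (v : ℕ) (M : ℤ) (h0 : 0 ∉ X) (hv : 0 < v)
    (hM : ∀ a ∈ X, (a:ℤ) + v ≤ M) :
    (Lset X v M).card
      = (X.filter (fun a => v ≤ a ∧ a - v ∉ X)).card
      + (X.filter (fun a => a ≤ v ∧ v - a ∈ X ∧ v - a < a)).card := by
  rw [← Finset.card_union_of_disjoint, ← Finset.filter_or]
  swap
  · rw [Finset.disjoint_filter]
    rintro a haX ⟨hva, _⟩ ⟨hav, hX, _⟩
    have : a = v := by omega
    subst this
    simp only [Nat.sub_self] at hX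
    exact h0 hX
  apply Finset.card_bij (fun w _ => ((v:ℤ) - w).toNat)
  · rintro w hw
    simp only [Lset, Finset.mem_filter, Finset.mem_Icc] at hw
    obtain ⟨⟨hw1, hw2⟩, hmw, hmvw, hlt⟩ := hw
    have hpos : 0 < (v:ℤ) - w := by omega
    have haX : ((v:ℤ) - w).toNat ∈ X := by
      rw [memW_pos hpos] at hmvw; exact hmvw
    simp only [Finset.mem_filter]
    refine ⟨haX, ?_⟩
    by_cases hw0 : w ≤ 0
    · left
      rw [memW_nonpos hw0] at hmw
      refine ⟨by omega, ?_⟩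
      have : ((v:ℤ) - w).toNat - v = (-w).toNat := by omega
      rw [this]; exact hmw
    · right
      push_neg at hw0
      rw [memW_pos hw0] at hmw
      refine ⟨by omega, ?_, by omega⟩
      have : v - ((v:ℤ) - w).toNat = w.toNat := by omega
      rw [this]; exact hmw
  · rintro w hw w' hw' he
    simp only [Lset, Finset.mem_filter, Finset.mem_Icc] at hw hw'
    have h1 : w < (v:ℤ) - w := hw.2.2.2
    have h2 : w' < (v:ℤ) - w' := hw'.2.2.2
    omega
  · rintro a ha
    simp only [Finset.mem_filter] at ha
    obtain ⟨haX, hQ⟩ := ha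
    have ha0 : 0 < a := by rcases Nat.eq_zero_or_pos a with rfl | h <;> [exact absurd haX h0; exact h]
    have haM := hM a haX
    refine ⟨(v:ℤ) - a, ?_, by omega⟩
    simp only [Lset, Finset.mem_filter, Finset.mem_Icc]
    have hvwa : (v:ℤ) - ((v:ℤ) - a) = a := by ring
    rcases hQ with ⟨hva, hnX⟩ | ⟨hav, hX, hlt⟩
    · refine ⟨⟨by omega, by omega⟩, ?_, ?_, by omega⟩
      · rw [memW_nonpos (by omega)]
        have : (-((v:ℤ) - a)).toNat = a - v := by omega
        rw [this]; exact hnX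
      · rw [hvwa, memW_natCast ha0]; exact haX
    · have hva0 : 0 < v - a := by
        rcases Nat.eq_zero_or_pos (v - a) with h | h <;> [skip; exact h]
        rw [h] at hX; exact absurd hX h0
      refine ⟨⟨by omega, by omega⟩, ?_, ?_, by omega⟩
      · rw [memW_pos (by omega)]
        have : ((v:ℤ) - a).toNat = v - a := by omega
        rw [this]; exact hX
      · rw [hvwa, memW_natCast ha0]; exact haX

lemma Hset_card (X : Finset ℕ) (v : ℕ) (M : ℤ) (h0 : 0 ∉ X) (hv : 0 < v)
    (hM : ∀ a ∈ X, (a:ℤ) + v ≤ M) (hvM : (v:ℤ) ≤ M) :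
    (Hset X v M).card = 2 * (Lset X v M).card + (if 2 ∣ v ∧ v / 2 ∈ X then 1 else 0) := by
  classical
  have hsplit := Finset.card_filter_add_card_filter_not
    (s := Hset X v M) (p := fun w => w < (v:ℤ) - w)
  have hA : (Hset X v M).filter (fun w => w < (v:ℤ) - w) = Lset X v M := by
    unfold Hset Lset
    rw [Finset.filter_filter]
    apply Finset.filter_congr
    intro w _; tauto
  have hsplit2 := Finset.card_filter_add_card_filter_not
    (s := (Hset X v M).filter (fun w => ¬ w < (v:ℤ) - w))
    (p := fun w => (v:ℤ) - w < w)
  -- the strictly-greater part bijects with Lset via w ↦ v - w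
  have hB : (((Hset X v M).filter (fun w => ¬ w < (v:ℤ) - w)).filter
      (fun w => (v:ℤ) - w < w)).card = (Lset X v M).card := by
    apply Finset.card_bij' (fun w _ => (v:ℤ) - w) (fun w _ => (v:ℤ) - w)
    · rintro w hw
      simp only [Hset, Finset.mem_filter, Finset.mem_Icc] at hw
      obtain ⟨⟨⟨⟨hw1, hw2⟩, hmw, hmvw⟩, _⟩, hgt⟩ := hw
      have hwpos : 0 < w := by omega
      have hwX : w.toNat ∈ X := by rw [memW_pos hwpos] at hmw; exact hmw
      have := hM _ hwX
      simp only [Lset, Finset.mem_filter, Finset.mem_Icc]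
      have hvv : (v:ℤ) - ((v:ℤ) - w) = w := by ring
      rw [hvv]
      exact ⟨⟨by omega, by omega⟩, hmvw, hmw, by omega⟩
    · rintro w hw
      simp only [Lset, Finset.mem_filter, Finset.mem_Icc] at hw
      obtain ⟨⟨hw1, hw2⟩, hmw, hmvw, hlt⟩ := hw
      have hpos : 0 < (v:ℤ) - w := by omega
      have haX : ((v:ℤ) - w).toNat ∈ X := by rw [memW_pos hpos] at hmvw; exact hmvw
      have := hM _ haX
      simp only [Hset, Finset.mem_filter, Finset.mem_Icc]
      have hvv : (v:ℤ) - ((v:ℤ) - w) = w := by ring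
      rw [hvv]
      exact ⟨⟨⟨⟨by omega, by omega⟩, hmvw, hmw⟩, by omega⟩, by omega⟩
    · intro w _; ring
    · intro w _; ring
  have hC : (((Hset X v M).filter (fun w => ¬ w < (v:ℤ) - w)).filter
      (fun w => ¬ (v:ℤ) - w < w)) = if 2 ∣ v ∧ v / 2 ∈ X then {((v / 2 : ℕ) : ℤ)} else ∅ := by
    split_ifs with h
    · obtain ⟨hdvd, hhalf⟩ := h
      have h2 : (v:ℤ) = 2 * ((v / 2 : ℕ) : ℤ) := by
        have := Nat.div_mul_cancel hdvd; push_cast; omega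
      ext w
      simp only [Hset, Finset.mem_filter, Finset.mem_Icc, Finset.mem_singleton]
      constructor
      · rintro ⟨⟨_, _⟩, _⟩; omega
      · rintro rfl
        have hpos : (0:ℤ) < ((v / 2 : ℕ) : ℤ) := by
          have : 0 < v / 2 := Nat.div_pos (by omega) (by omega)
          exact_mod_cast this
        have hmem : memW X ((v / 2 : ℕ) : ℤ) := by
          rw [memW_natCast (by omega : 0 < v/2)]; exact hhalf
        have hmem2 : memW X ((v:ℤ) - ((v / 2 : ℕ) : ℤ)) := by
          rw [show (v:ℤ) - ((v / 2 : ℕ) : ℤ) = ((v / 2 : ℕ) : ℤ) by omega]; exact hmem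
        exact ⟨⟨⟨⟨by omega, by omega⟩, hmem, hmem2⟩, by omega⟩, by omega⟩
    · ext w
      simp only [Hset, Finset.mem_filter, Finset.mem_Icc, Finset.notMem_empty, iff_false,
        not_and]
      rintro ⟨⟨⟨hw1, hw2⟩, hmw, hmvw⟩, hng⟩ hng2
      have hww : 2 * w = (v:ℤ) := by omega
      have hwpos : 0 < w := by omega
      have hwX : w.toNat ∈ X := by rw [memW_pos hwpos] at hmw; exact hmw
      exact h ⟨by omega, by rwa [show v / 2 = w.toNat by omega]⟩
  rw [hA] at hsplit
  rw [hB, hC] at hsplit2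
  have : (if 2 ∣ v ∧ v / 2 ∈ X then ({((v / 2 : ℕ) : ℤ)} : Finset ℤ) else ∅).card
      = (if 2 ∣ v ∧ v / 2 ∈ X then 1 else 0) := by split_ifs <;> simp
  omega

/-- Number of window positions on runner `j` occupied by `W(X)`. -/
noncomputable def NjC (X : Finset ℕ) (M d j : ℤ) : ℕ :=
  ((Finset.Icc (-M) M).filter (fun w => w % d = j ∧ memW X w)).card

noncomputable def HjC (X : Finset ℕ) (v : ℕ) (M d j : ℤ) : ℕ :=
  ((Finset.Icc (-M) M).filter (fun w => w % d = j ∧ memW X w ∧ memW X ((v:ℤ) - w))).card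

noncomputable def HbarjC (X : Finset ℕ) (v : ℕ) (M d j : ℤ) : ℕ :=
  ((Finset.Icc (-M) M).filter (fun w => w % d = j ∧ ¬ memW X w ∧ ¬ memW X ((v:ℤ) - w))).card

lemma res_shift {d j v' : ℤ} (hj : 0 ≤ j) (hjd : j < d) (w : ℤ) :
    ((v' - w) % d = j) ↔ (w % d = (v' - j) % d) := by
  have hjj : j % d = j := Int.emod_eq_of_lt hj hjd
  conv_lhs => rw [← hjj]
  rw [show ((v' - w) % d = j % d) = ((v' - w) ≡ j [ZMOD d]) from rfl,
    show (w % d = (v' - j) % d) = (w ≡ (v' - j) [ZMOD d]) from rfl,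
    Int.modEq_iff_dvd, Int.modEq_iff_dvd]
  constructor
  · intro h
    have he : (v' - j) - w = -(j - (v' - w)) := by ring
    rw [he]
    exact dvd_neg.mpr h
  · intro h
    have he : j - (v' - w) = -((v' - j) - w) := by ring
    rw [he]
    exact dvd_neg.mpr h

lemma runner_key (X : Finset ℕ) (v : ℕ) (M d j : ℤ) (hv : 0 < v)
    (hj : 0 ≤ j) (hjd : j < d)
    (hM : ∀ a ∈ X, (a:ℤ) + v ≤ M) (hvM : (v:ℤ) ≤ M) :
    HjC X v M d j + ((Finset.Icc (-M) M).filter (fun w => w % d = j)).card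
      + ((Finset.Icc (-M) ((v:ℤ) - M - 1)).filter (fun w => w % d = ((v:ℤ) - j) % d)).card
    = NjC X M d j + NjC X M d (((v:ℤ) - j) % d) + HbarjC X v M d j := by
  classical
  -- E1 : pointwise over Icc (-M) M
  have E1 : HjC X v M d j + ((Finset.Icc (-M) M).filter (fun w => w % d = j)).card
      = NjC X M d j
        + ((Finset.Icc (-M) M).filter (fun w => w % d = j ∧ memW X ((v:ℤ) - w))).card
        + HbarjC X v M d j := by
    unfold HjC NjC HbarjC
    rw [Finset.card_filter, Finset.card_filter, Finset.card_filter, Finset.card_filter,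
      Finset.card_filter]
    rw [← Finset.sum_add_distrib, ← Finset.sum_add_distrib, ← Finset.sum_add_distrib]
    apply Finset.sum_congr rfl
    intro w _
    by_cases h1 : w % d = j <;> by_cases h2 : memW X w <;>
      by_cases h3 : memW X ((v:ℤ) - w) <;> simp [h1, h2, h3]
  -- E2 : reindex w ↦ v - w
  have hres : ∀ w : ℤ, (((v:ℤ) - w) % d = ((v:ℤ) - j) % d) ↔ (w % d = j) := by
    intro w
    have h := res_shift (v' := (v:ℤ)) hj hjd ((v:ℤ) - w)
    rw [show (v:ℤ) - ((v:ℤ) - w) = w by ring] at h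
    exact h.symm
  have E2 : ((Finset.Icc (-M) M).filter (fun w => w % d = j ∧ memW X ((v:ℤ) - w))).card
      = ((Finset.Icc ((v:ℤ) - M) ((v:ℤ) + M)).filter
          (fun w => w % d = (((v:ℤ) - j) % d) ∧ memW X w)).card := by
    apply Finset.card_bij (fun w _ => (v:ℤ) - w)
    · rintro w hw
      simp only [Finset.mem_filter, Finset.mem_Icc] at hw ⊢
      obtain ⟨⟨hw1, hw2⟩, hr, hm⟩ := hw
      exact ⟨⟨by omega, by omega⟩, (hres w).mpr hr, hm⟩
    · rintro w hw w2 hw2 he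
      omega
    · rintro a ha
      simp only [Finset.mem_filter, Finset.mem_Icc] at ha
      obtain ⟨⟨ha1, ha2⟩, hr, hm⟩ := ha
      refine ⟨(v:ℤ) - a, ?_, by ring⟩
      simp only [Finset.mem_filter, Finset.mem_Icc]
      rw [show (v:ℤ) - ((v:ℤ) - a) = a by ring]
      refine ⟨⟨by omega, by omega⟩, ?_, hm⟩
      exact (hres ((v:ℤ) - a)).mp (by rw [show (v:ℤ) - ((v:ℤ) - a) = a by ring]; exact hr)
  -- E3 : complete the shifted window to the standard one
  have E3 : ((Finset.Icc ((v:ℤ) - M) ((v:ℤ) + M)).filter (fun w => w % d = (((v:ℤ) - j) % d) ∧ memW X w)).card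
      + ((Finset.Icc (-M) ((v:ℤ) - M - 1)).filter (fun w => w % d = (((v:ℤ) - j) % d))).card
      = NjC X M d (((v:ℤ) - j) % d) := by
    unfold NjC
    have hbig : ∀ (lo hi : ℤ) (p : ℤ → Prop) [DecidablePred p], -M ≤ lo → hi ≤ (v:ℤ) + M →
        ((Finset.Icc lo hi).filter p).card
          = ∑ w ∈ Finset.Icc (-M) ((v:ℤ) + M), if lo ≤ w ∧ w ≤ hi ∧ p w then 1 else 0 := by
      intro lo hi p _ hlo hhi
      rw [← Finset.card_filter]
      congr 1
      ext w
      simp only [Finset.mem_filter, Finset.mem_Icc]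
      constructor
      · rintro ⟨⟨h1, h2⟩, h3⟩; exact ⟨⟨by omega, by omega⟩, h1, h2, h3⟩
      · rintro ⟨_, h1, h2, h3⟩; exact ⟨⟨h1, h2⟩, h3⟩
    rw [hbig _ _ _ (by omega) (by omega), hbig _ _ _ (by omega) (by omega),
      hbig _ _ _ (by omega) (by omega)]
    rw [← Finset.sum_add_distrib]
    apply Finset.sum_congr rfl
    intro w hw
    simp only [Finset.mem_Icc] at hw
    by_cases hr : w % d = (((v:ℤ) - j) % d)
    · by_cases hle : w ≤ (v:ℤ) - M - 1
      · -- here memW X w holds automatically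
        have hmw : memW X w := by
          rw [memW_nonpos (show w ≤ 0 by omega)]
          intro hmem
          have := hM _ hmem
          omega
        simp only [hr, hmw, and_true, true_and]
        have : ¬ ((v:ℤ) - M ≤ w) := by omega
        split_ifs <;> omega
      · by_cases hle2 : w ≤ M
        · by_cases hmw : memW X w
          · simp only [hr, hmw, and_true, true_and]
            split_ifs <;> omega
          · simp only [hr, hmw, and_true, and_false, false_and, true_and]
            split_ifs <;> omega
        · -- w > M : memW X w fails
          have hmw : ¬ memW X w := by
            rw [memW_pos (show (0:ℤ) < w by omega)]
            intro hmem
            have := hM _ hmem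
            omega
          simp only [hr, hmw, and_false, false_and, and_true, true_and]
          split_ifs <;> omega
    · simp only [hr, false_and, and_false]
      simp
  omega

lemma NjC_eq_of_equiv {X Y : Finset ℕ} {M dz j : ℤ} (φ : ℤ → ℤ)
    (hφicc : ∀ w, w ∈ Finset.Icc (-M) M → φ w ∈ Finset.Icc (-M) M)
    (hφinv : ∀ w, φ (φ w) = w)
    (hφres : ∀ w, (φ w) % dz = w % dz)
    (hφmem : ∀ w, memW Y w ↔ memW X (φ w)) :
    NjC Y M dz j = NjC X M dz j := by
  unfold NjC
  apply Finset.card_bij' (fun w _ => φ w) (fun w _ => φ w)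
  · rintro w hw
    simp only [Finset.mem_filter] at hw ⊢
    exact ⟨hφicc w hw.1, by rw [hφres]; exact hw.2.1, (hφmem w).mp hw.2.2⟩
  · rintro w hw
    simp only [Finset.mem_filter] at hw ⊢
    refine ⟨hφicc w hw.1, by rw [hφres]; exact hw.2.1, ?_⟩
    rw [hφmem (φ w), hφinv]
    exact hw.2.2
  · intro w _; exact hφinv w
  · intro w _; exact hφinv w

lemma dvd_emod_eq {dz x y : ℤ} (h : dz ∣ x - y) : x % dz = y % dz :=
  Int.modEq_iff_dvd.mpr (by rw [show y - x = -(x - y) by ring]; exact dvd_neg.mpr h)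

lemma Nj_invariant_step {d h : ℕ} {s t : Finset ℕ} (hdvd : d ∣ h) (h0 : 0 ∉ s)
    (hstep : RemoveBarLen h s t) (M : ℤ) (hM : ∀ a ∈ s, (a:ℤ) ≤ M) (j : ℤ) :
    NjC t M (d:ℤ) j = NjC s M (d:ℤ) j := by
  have hdvd' : (d:ℤ) ∣ (h:ℤ) := by exact_mod_cast hdvd
  rcases hstep with ⟨a, ha, b, hb, hab, hh, rfl⟩ | ⟨a, ha, hpos, hha, hnot, ht⟩
  · -- type 1 : remove a and b, h = a + b
    have ha1 : 0 < a := Nat.pos_of_ne_zero (fun hz => h0 (hz ▸ ha))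
    have hb1 : 0 < b := Nat.pos_of_ne_zero (fun hz => h0 (hz ▸ hb))
    have hMa := hM a ha; have hMb := hM b hb
    have habz : (a:ℤ) ≠ (b:ℤ) := by exact_mod_cast hab
    have key : (d:ℤ) ∣ (a:ℤ) + (b:ℤ) := by
      have : ((a:ℤ) + b) = (h:ℤ) := by exact_mod_cast hh.symm
      rw [this]; exact hdvd'
    have htm : ∀ n : ℕ, (n ∈ (s.erase a).erase b) ↔ (n ≠ a ∧ n ≠ b ∧ n ∈ s) := by
      intro n; simp only [Finset.mem_erase]; tauto
    apply NjC_eq_of_equiv (fun w => if w = (a:ℤ) then -(b:ℤ) else if w = -(b:ℤ) then (a:ℤ)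
      else if w = (b:ℤ) then -(a:ℤ) else if w = -(a:ℤ) then (b:ℤ) else w)
    · intro w hw
      simp only [Finset.mem_Icc] at hw ⊢
      split_ifs <;> omega
    · intro w
      beta_reduce
      split_ifs <;> omega
    · intro w
      beta_reduce
      split_ifs with h1 h2 h3 h4
      · subst h1; exact dvd_emod_eq (by rw [show -(b:ℤ) - (a:ℤ) = -((a:ℤ) + (b:ℤ)) by ring]; exact dvd_neg.mpr key)
      · subst h2; exact dvd_emod_eq (by simpa using key)
      · subst h3; exact dvd_emod_eq (by rw [show -(a:ℤ) - (b:ℤ) = -((a:ℤ) + (b:ℤ)) by ring]; exact dvd_neg.mpr key)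
      · subst h4; exact dvd_emod_eq (by simpa [add_comm] using key)
      · rfl
    · intro w
      beta_reduce
      split_ifs with h1 h2 h3 h4
      · subst h1
        rw [show ((a:ℕ):ℤ) = ((a:ℕ):ℤ) from rfl, memW_natCast ha1, memW_neg_natCast]
        simp only [htm]; tauto
      · subst h2
        rw [memW_neg_natCast, memW_natCast ha1]
        simp only [htm]; tauto
      · subst h3
        rw [memW_natCast hb1, memW_neg_natCast]
        simp only [htm]; tauto
      · subst h4
        rw [memW_neg_natCast, memW_natCast hb1]
        simp only [htm]; tauto
      · by_cases hw : 0 < w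
        · rw [memW_pos hw, memW_pos hw]
          simp only [htm]
          have : w.toNat ≠ a ∧ w.toNat ≠ b := by omega
          tauto
        · push_neg at hw
          rw [memW_nonpos hw, memW_nonpos hw]
          simp only [htm]
          have : (-w).toNat ≠ a ∧ (-w).toNat ≠ b := by omega
          tauto
  · -- type 2 : a ↦ a - h
    have ha1 : 0 < a := Nat.pos_of_ne_zero (fun hz => h0 (hz ▸ ha))
    have hMa := hM a ha
    by_cases hea : h = a
    · -- remove the part a entirely; d ∣ a
      subst hea
      simp only [if_pos rfl] at ht
      subst ht
      have htm : ∀ n : ℕ, (n ∈ s.erase h) ↔ (n ≠ h ∧ n ∈ s) := by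
        intro n; simp only [Finset.mem_erase]
      apply NjC_eq_of_equiv (fun w => if w = (h:ℤ) then -(h:ℤ) else if w = -(h:ℤ) then (h:ℤ) else w)
      · intro w hw
        simp only [Finset.mem_Icc] at hw ⊢
        split_ifs <;> omega
      · intro w; beta_reduce; split_ifs <;> omega
      · intro w
        beta_reduce
        split_ifs with h1 h2
        · subst h1
          apply dvd_emod_eq
          have e2 : -(h:ℤ) - (h:ℤ) = -(2*(h:ℤ)) := by ring
          rw [e2]
          exact dvd_neg.mpr (Dvd.dvd.mul_left hdvd' 2)
        · subst h2
          apply dvd_emod_eq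
          have e2 : (h:ℤ) - -(h:ℤ) = 2*(h:ℤ) := by ring
          rw [e2]
          exact Dvd.dvd.mul_left hdvd' 2
        · rfl
      · intro w
        beta_reduce
        split_ifs
        all_goals try subst_vars
        all_goals first
          | (rw [memW_natCast hpos, memW_neg_natCast]; simp only [htm]; tauto)
          | (rw [memW_neg_natCast, memW_natCast hpos]; simp only [htm]; tauto)
          | (by_cases hw : 0 < w
             · rw [memW_pos hw, memW_pos hw]
               simp only [htm]
               have : w.toNat ≠ h := by omega
               tauto
             · push_neg at hw
               rw [memW_nonpos hw, memW_nonpos hw]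
               simp only [htm]
               have : (-w).toNat ≠ h := by omega
               tauto)
    · -- replace a by a - h, with 0 < a - h
      simp only [if_neg hea] at ht
      subst ht
      have hlt : h < a := lt_of_le_of_ne hha hea
      have hahz : ((a - h : ℕ) : ℤ) = (a:ℤ) - (h:ℤ) := by omega
      have hah1 : 0 < a - h := by omega
      have htm : ∀ n : ℕ, (n ∈ insert (a - h) (s.erase a)) ↔ (n = a - h ∨ (n ≠ a ∧ n ∈ s)) := by
        intro n; simp only [Finset.mem_insert, Finset.mem_erase]
      apply NjC_eq_of_equiv (fun w => if w = (a:ℤ) then ((a - h:ℕ):ℤ)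
        else if w = ((a - h:ℕ):ℤ) then (a:ℤ)
        else if w = -(a:ℤ) then -((a - h:ℕ):ℤ)
        else if w = -((a - h:ℕ):ℤ) then -(a:ℤ) else w)
      · intro w hw
        simp only [Finset.mem_Icc] at hw ⊢
        split_ifs <;> omega
      · intro w; beta_reduce; split_ifs <;> omega
      · intro w
        have key : (d:ℤ) ∣ (a:ℤ) - ((a - h:ℕ):ℤ) := by rw [hahz]; simpa using hdvd'
        beta_reduce
        split_ifs with h1 h2 h3 h4
        · subst h1; exact dvd_emod_eq (by simpa using dvd_neg.mpr key)
        · subst h2; exact dvd_emod_eq key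
        · subst h3
          exact dvd_emod_eq (by rw [show -((a-h:ℕ):ℤ) - -(a:ℤ) = (a:ℤ) - ((a-h:ℕ):ℤ) by ring]; exact key)
        · subst h4
          exact dvd_emod_eq (by rw [show -(a:ℤ) - -((a-h:ℕ):ℤ) = -((a:ℤ) - ((a-h:ℕ):ℤ)) by ring]; exact dvd_neg.mpr key)
        · rfl
      · intro w
        beta_reduce
        split_ifs with h1 h2 h3 h4
        · subst h1
          rw [memW_natCast ha1, memW_natCast hah1]
          simp only [htm]
          constructor
          · rintro (h' | ⟨h', _⟩) <;> omega
          · intro h'; exact absurd h' hnot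
        · subst h2
          rw [memW_natCast hah1, memW_natCast ha1]
          simp only [htm]; tauto
        · subst h3
          rw [memW_neg_natCast, memW_neg_natCast]
          have hne : a ≠ a - h := by omega
          simp [Finset.mem_insert, Finset.mem_erase, hnot, hne]
        · subst h4
          rw [memW_neg_natCast, memW_neg_natCast]
          simp [Finset.mem_insert, ha]
        · by_cases hw : 0 < w
          · rw [memW_pos hw, memW_pos hw]
            simp only [htm]
            have : w.toNat ≠ a ∧ w.toNat ≠ a - h := by omega
            tauto
          · push_neg at hw
            rw [memW_nonpos hw, memW_nonpos hw]
            simp only [htm]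
            have : (-w).toNat ≠ a ∧ (-w).toNat ≠ a - h := by omega
            tauto

lemma step_pres {h : ℕ} {s t : Finset ℕ} {S : ℤ} (h0 : 0 ∉ s) (hstep : RemoveBarLen h s t)
    (hM : ∀ a ∈ s, (a:ℤ) ≤ S) : 0 ∉ t ∧ ∀ a ∈ t, (a:ℤ) ≤ S := by
  rcases hstep with ⟨a, ha, b, hb, hab, hh, rfl⟩ | ⟨a, ha, hpos, hha, hnot, ht⟩
  · constructor
    · intro hcon
      exact h0 (Finset.mem_of_mem_erase (Finset.mem_of_mem_erase hcon))
    · intro x hx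
      exact hM x (Finset.mem_of_mem_erase (Finset.mem_of_mem_erase hx))
  · subst ht
    by_cases hea : h = a
    · simp only [if_pos hea]
      constructor
      · intro hcon; exact h0 (Finset.mem_of_mem_erase hcon)
      · intro x hx; exact hM x (Finset.mem_of_mem_erase hx)
    · simp only [if_neg hea]
      have hMa := hM a ha
      constructor
      · intro hcon
        rcases Finset.mem_insert.mp hcon with hc | hc
        · omega
        · exact h0 (Finset.mem_of_mem_erase hc)
      · intro x hx
        rcases Finset.mem_insert.mp hx with hc | hc
        · subst hc; omega
        · exact hM x (Finset.mem_of_mem_erase hc)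

lemma invariants (d : ℕ) {s c : Finset ℕ} (h0 : 0 ∉ s)
    (hrtg : Relation.ReflTransGen (RemoveDBar d) s c) (S M : ℤ)
    (hM : ∀ a ∈ s, (a:ℤ) ≤ S) (hSM : S ≤ M) :
    (0 ∉ c) ∧ (∀ a ∈ c, (a:ℤ) ≤ S) ∧ (∀ j, NjC c M (d:ℤ) j = NjC s M (d:ℤ) j) := by
  induction hrtg with
  | refl => exact ⟨h0, hM, fun _ => rfl⟩
  | tail hab hbc ih =>
    obtain ⟨h0b, hMb, hNb⟩ := ih
    obtain ⟨h, hdvd, hstep⟩ := hbc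
    obtain ⟨h0c, hMc⟩ := step_pres h0b hstep hMb
    refine ⟨h0c, hMc, fun j => ?_⟩
    rw [Nj_invariant_step hdvd h0b hstep M (fun a ha => le_trans (hMb a ha) hSM) j]
    exact hNb j

lemma Hset_decomp (X : Finset ℕ) (v : ℕ) (M : ℤ) (d : ℕ) (hd : 0 < d) :
    (Hset X v M).card = ∑ j ∈ Finset.Icc (0:ℤ) ((d:ℤ)-1), HjC X v M (d:ℤ) j := by
  unfold Hset HjC
  rw [Finset.card_eq_sum_card_fiberwise (f := fun w => w % (d:ℤ))
    (t := Finset.Icc 0 ((d:ℤ)-1)) ?_]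
  · apply Finset.sum_congr rfl
    intro j _
    congr 1
    rw [Finset.filter_filter]
    apply Finset.filter_congr
    intro w _
    tauto
  · intro x _
    have hd' : (0:ℤ) < (d:ℤ) := by exact_mod_cast hd
    have h1 := Int.emod_nonneg x (by omega : (d:ℤ) ≠ 0)
    have h2 := Int.emod_lt_of_pos x hd'
    simp only [Finset.mem_Icc]
    exact Finset.mem_coe.mpr (Finset.mem_Icc.mpr ⟨h1, by omega⟩)

lemma core_removal (d : ℕ) (hd : Odd d) (h3 : 3 ≤ d) {c : Finset ℕ} (h0 : 0 ∉ c)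
    {x y : ℤ} (hx : memW c x) (hy : ¬ memW c y) (hxy : y < x)
    (hres : x % (d:ℤ) = y % (d:ℤ)) : ∃ t, RemoveDBar d c t := by
  have hdvd : (d:ℤ) ∣ x - y := by
    have := Int.ModEq.dvd (show x ≡ y [ZMOD (d:ℤ)] from hres)
    have he : x - y = -(y - x) := by ring
    rw [he]; exact dvd_neg.mpr this
  have hy0 : y ≠ 0 := by
    rintro rfl
    rw [memW_nonpos le_rfl] at hy
    simp only [neg_zero, Int.toNat_zero] at hy
    exact hy (fun hcon => h0 hcon) |>.elim
  have hpos_mem : ∀ n : ℕ, n ∈ c → 0 < n := by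
    intro n hn
    rcases Nat.eq_zero_or_pos n with rfl | h
    · exact absurd hn h0
    · exact h
  rcases lt_or_ge 0 x with hx0 | hx0
  · have haX : x.toNat ∈ c := (memW_pos hx0).mp hx
    rcases lt_or_ge 0 y with hy0' | hy0'
    · -- remove a bar of length x - y from part x
      have hbX : y.toNat ∉ c := by
        intro hcon
        exact hy ((memW_pos hy0').mpr hcon)
      refine ⟨_, (x - y).toNat, by exact_mod_cast Int.natCast_dvd_natCast.mp (by
        rwa [Int.toNat_of_nonneg (by omega)]), Or.inr ⟨x.toNat, haX, by omega, by omega, ?_, rfl⟩⟩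
      rw [show x.toNat - (x - y).toNat = y.toNat by omega]
      exact hbX
    · -- y < 0
      have hbX : (-y).toNat ∈ c := by
        rw [memW_nonpos (by omega)] at hy
        exact not_not.mp hy
      by_cases heq : x.toNat = (-y).toNat
      · -- x = -y : d ∣ 2x hence d ∣ x; remove whole part
        have hd2 : d ∣ 2 * x.toNat := by
          have : (d:ℤ) ∣ 2 * (x.toNat:ℤ) := by
            have he : 2 * (x.toNat:ℤ) = x - y := by omega
            rw [he]; exact hdvd
          exact_mod_cast this
        have hdx : d ∣ x.toNat := (Nat.Coprime.dvd_of_dvd_mul_left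
          (Nat.Coprime.symm (Nat.coprime_two_left.mpr hd)) hd2)
        refine ⟨_, x.toNat, hdx, Or.inr ⟨x.toNat, haX, hpos_mem _ haX, le_rfl, ?_, rfl⟩⟩
        simp only [Nat.sub_self]
        exact h0
      · -- two distinct parts x and -y with d ∣ x + (-y)
        refine ⟨_, (x - y).toNat, by exact_mod_cast Int.natCast_dvd_natCast.mp (by
          rwa [Int.toNat_of_nonneg (by omega)]),
          Or.inl ⟨x.toNat, haX, (-y).toNat, hbX, heq, by omega, rfl⟩⟩
  · -- x ≤ 0, so y < x ≤ 0
    have hxX : (-x).toNat ∉ c := by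
      rw [memW_nonpos hx0] at hx
      exact hx
    have hbX : (-y).toNat ∈ c := by
      rw [memW_nonpos (by omega)] at hy
      exact not_not.mp hy
    refine ⟨_, (x - y).toNat, by exact_mod_cast Int.natCast_dvd_natCast.mp (by
      rwa [Int.toNat_of_nonneg (by omega)]), Or.inr ⟨(-y).toNat, hbX, by omega, by omega, ?_, rfl⟩⟩
    rw [show (-y).toNat - (x - y).toNat = (-x).toNat by omega]
    exact hxX

lemma core_dichotomy (d : ℕ) (hd : Odd d) (h3 : 3 ≤ d) {c : Finset ℕ} (h0 : 0 ∉ c)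
    (hcore : ∀ t, ¬ RemoveDBar d c t) (v : ℕ) (M j : ℤ) :
    HjC c v M (d:ℤ) j = 0 ∨ HbarjC c v M (d:ℤ) j = 0 := by
  by_contra hcon
  push_neg at hcon
  obtain ⟨h1, h2⟩ := hcon
  obtain ⟨w1, hw1⟩ := Finset.card_ne_zero.mp h1
  obtain ⟨w2, hw2⟩ := Finset.card_ne_zero.mp h2
  simp only [Finset.mem_filter, Finset.mem_Icc] at hw1 hw2
  obtain ⟨_, hr1, hm1, hm1'⟩ := hw1
  obtain ⟨_, hr2, hm2, hm2'⟩ := hw2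
  rcases lt_trichotomy w2 w1 with hlt | heq | hlt
  · obtain ⟨t, ht⟩ := core_removal d hd h3 h0 hm1 hm2 hlt (by rw [hr1, hr2])
    exact hcore t ht
  · subst heq; exact hm2 hm1
  · have hdw : (d:ℤ) ∣ w1 - w2 := Int.ModEq.dvd (show w2 ≡ w1 [ZMOD (d:ℤ)] by
      unfold Int.ModEq; rw [hr1, hr2])
    have hres : ((v:ℤ) - w1) % (d:ℤ) = ((v:ℤ) - w2) % (d:ℤ) := by
      apply dvd_emod_eq
      have he : ((v:ℤ) - w1) - ((v:ℤ) - w2) = -(w1 - w2) := by ring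
      rw [he]
      exact dvd_neg.mpr hdw
    obtain ⟨t, ht⟩ := core_removal d hd h3 h0 hm1' hm2' (by omega) hres
    exact hcore t ht

lemma count_zero_bar (X : Finset ℕ) : Multiset.count 0 (barMultisetF X) = 0 := by
  rw [Multiset.count_eq_zero]
  intro hmem
  unfold barMultisetF at hmem
  rw [Multiset.mem_add] at hmem
  rcases hmem with h | h
  · rw [Multiset.mem_bind] at h
    obtain ⟨a, _, h⟩ := h
    rw [Multiset.mem_filter] at h
    obtain ⟨h, _⟩ := h
    rw [Multiset.mem_map] at h
    obtain ⟨x, _, hx⟩ := h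
    omega
  · rw [Multiset.mem_bind] at h
    obtain ⟨a, _, h⟩ := h
    rw [Multiset.mem_map] at h
    obtain ⟨b, hb, hab⟩ := h
    have hba : b < a := (Finset.mem_filter.mp (Finset.mem_val.mp hb)).2
    omega

theorem barMultiset_core_le' (d : ℕ) (hd : Odd d) (h3 : 3 ≤ d) (s c : Finset ℕ)
    (hs : 0 ∉ s) (hc : IsBarCore d s c) :
    barMultisetF c ≤ barMultisetF s := by
  obtain ⟨hrtg, hnorem⟩ := hc
  rw [Multiset.le_iff_count]
  intro v
  rcases Nat.eq_zero_or_pos v with rfl | hv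
  · simp [count_zero_bar]
  · have hd0 : 0 < d := by omega
    set S : ℤ := ((s.sup id : ℕ) : ℤ) with hS
    set M : ℤ := S + (v:ℤ) + 1 with hM
    have hS0 : (0:ℤ) ≤ S := by rw [hS]; exact Int.natCast_nonneg _
    have hMs : ∀ a ∈ s, (a:ℤ) ≤ S := by
      intro a ha
      rw [hS]
      exact_mod_cast Nat.cast_le.mpr (Finset.le_sup (f := id) ha)
    obtain ⟨h0c, hMc, hNc⟩ := invariants d hs hrtg S M hMs (by omega)
    have hMs' : ∀ a ∈ s, (a:ℤ) + (v:ℤ) ≤ M := fun a ha => by have := hMs a ha; omega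
    have hMc' : ∀ a ∈ c, (a:ℤ) + (v:ℤ) ≤ M := fun a ha => by have := hMc a ha; omega
    have hvM : (v:ℤ) ≤ M := by omega
    have hcount_c : Multiset.count v (barMultisetF c) = (Lset c v M).card := by
      rw [countB c v h0c hv, card_Lset c v M h0c hv hMc']
    have hcount_s : Multiset.count v (barMultisetF s) = (Lset s v M).card := by
      rw [countB s v hs hv, card_Lset s v M hs hv hMs']
    have hH_c := Hset_card c v M h0c hv hMc' hvM
    have hH_s := Hset_card s v M hs hv hMs' hvM
    have hHle : (Hset c v M).card ≤ (Hset s v M).card := by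
      rw [Hset_decomp c v M d hd0, Hset_decomp s v M d hd0]
      apply Finset.sum_le_sum
      intro j hj
      simp only [Finset.mem_Icc] at hj
      have hjd : j < (d:ℤ) := by omega
      have hrun_c := runner_key c v M (d:ℤ) j hv hj.1 hjd hMc' hvM
      have hrun_s := runner_key s v M (d:ℤ) j hv hj.1 hjd hMs' hvM
      rcases core_dichotomy d hd h3 h0c hnorem v M j with hz | hz
      · rw [hz]; exact Nat.zero_le _
      · rw [hz] at hrun_c
        have e1 := hNc j
        have e2 := hNc (((v:ℤ) - j) % (d:ℤ))
        omega
    have he_c : (if 2 ∣ v ∧ v / 2 ∈ c then 1 else 0) ≤ 1 := by split_ifs <;> omega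
    have he_s : (if 2 ∣ v ∧ v / 2 ∈ s then 1 else 0) ≤ 1 := by split_ifs <;> omega
    rw [hcount_c, hcount_s]
    omega

/-- the bar lengths of the `d̄`-core form a sub-multiset of those of `λ`. -/
theorem barMultiset_core_le (d : ℕ) (hd : Odd d) (h3 : 3 ≤ d) (s c : Finset ℕ)
    (hs : 0 ∉ s) (hc : IsBarCore d s c) :
    barMultisetF c ≤ barMultisetF s :=
  barMultiset_core_le' d hd h3 s c hs hc

end BarPartitions
end

section
/- Let d ≥ 3 be odd and λ a strict partition. The number of bars of λ of length divisible by d equals the number of bars of the d̄-quotient partition q̄_d(λ) of length divisible by d, and indeed the multisets of their lengths coincide: {b ∈ B(λ) : d | b} = {b ∈ B(q̄_d(λ)) : d | b} as multisets. -/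
namespace BarPartitions

/-- number of elements of `X` below `x`. -/
def phiF (X : Finset ℕ) (x : ℕ) : ℕ := x - (X.filter (· < x)).card

lemma card_filter_lt_sort (X : Finset ℕ) (k : ℕ) (hk : k < (X.sort (· ≤ ·)).length) :
    (X.filter (· < (X.sort (· ≤ ·))[k])).card = k := by
  have hst : List.Pairwise (· < ·) (X.sort (· ≤ ·)) := (Finset.sortedLT_sort X).pairwise
  set l := X.sort (· ≤ ·) with hl
  have hmono : ∀ (j1 j2 : ℕ) (h1 : j1 < l.length) (h2 : j2 < l.length), j1 < j2 → l[j1] < l[j2] := by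
    intro j1 j2 h1 h2 hlt
    have := hst.rel_get_of_lt (a := ⟨j1, h1⟩) (b := ⟨j2, h2⟩) (by simpa using hlt)
    simpa using this
  have hmemX : ∀ y, y ∈ l ↔ y ∈ X := fun y => Finset.mem_sort _
  have himg : X.filter (· < l[k]) = (Finset.range k).image (fun j => l.getD j 0) := by
    ext y
    simp only [Finset.mem_filter, Finset.mem_image, Finset.mem_range]
    constructor
    · rintro ⟨hyX, hylt⟩
      have hyl : y ∈ l := (hmemX y).2 hyX
      obtain ⟨j, hj, hjy⟩ := List.mem_iff_getElem.1 hyl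
      refine ⟨j, ?_, by simp [List.getD_eq_getElem, hj, hjy]⟩
      by_contra hjk
      push_neg at hjk
      rcases eq_or_lt_of_le hjk with h | h
      · subst h; omega
      · have := hmono k j hk hj h; omega
    · rintro ⟨j, hjk, hjy⟩
      have hj : j < l.length := lt_of_lt_of_le hjk (by omega)
      rw [List.getD_eq_getElem l 0 hj] at hjy
      subst hjy
      exact ⟨(hmemX _).1 (List.getElem_mem hj), hmono j k hj hk hjk⟩
  rw [himg, Finset.card_image_of_injOn, Finset.card_range]
  intro j1 h1 j2 h2 heq
  simp only [Finset.coe_range, Set.mem_Iio] at h1 h2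
  have hj1 : j1 < l.length := by omega
  have hj2 : j2 < l.length := by omega
  simp only [List.getD_eq_getElem l 0 hj1, List.getD_eq_getElem l 0 hj2] at heq
  by_contra hne
  rcases Nat.lt_or_ge j1 j2 with h | h
  · have := hmono j1 j2 hj1 hj2 h; omega
  · have := hmono j2 j1 hj2 hj1 (by omega); omega

lemma pOBS_eq (X : Finset ℕ) :
    partitionOfBetaSet X = (X.val.map (phiF X)).filter (fun v => 0 < v) := by
  unfold partitionOfBetaSet
  congr 1
  have hlist : (X.sort (· ≤ ·)).zipIdx.map (fun p => p.1 - p.2)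
      = (X.sort (· ≤ ·)).map (phiF X) := by
    apply List.ext_getElem
    · simp [List.length_zipIdx]
    · intro k h1 h2
      simp only [List.getElem_map, List.getElem_zipIdx, Nat.zero_add]
      have h2' : k < (X.sort (· ≤ ·)).length := by simpa using h2
      rw [phiF, card_filter_lt_sort X k h2']
  rw [hlist, ← Multiset.map_coe, Finset.sort_eq]
def h1c (A : Finset ℕ) (n : ℕ) : ℕ := (A.filter (fun x => 0 < n ∧ n ≤ x ∧ x - n ∉ A)).card

lemma img_val {f : ℕ → ℕ} (hf : Function.Injective f) (s : Finset ℕ) :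
    (s.image f).val = s.val.map f := by
  rw [Finset.image_val, Multiset.dedup_eq_self.2 (s.nodup.map hf)]

lemma shift_val (X : Finset ℕ) :
    (insert 0 (X.image (· + 1)) : Finset ℕ).val = 0 ::ₘ X.val.map (· + 1) := by
  rw [Finset.insert_val_of_notMem (by simp), img_val (add_left_injective 1)]

lemma phi_shift (X : Finset ℕ) (x : ℕ) :
    phiF (insert 0 (X.image (· + 1))) (x + 1) = phiF X x := by
  have hfil : (insert 0 (X.image (· + 1)) : Finset ℕ).filter (· < x + 1)
      = insert 0 ((X.filter (· < x)).image (· + 1)) := by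
    ext z
    simp only [Finset.mem_filter, Finset.mem_insert, Finset.mem_image]
    constructor
    · rintro ⟨rfl | ⟨w, hw, rfl⟩, hlt⟩
      · exact Or.inl rfl
      · exact Or.inr ⟨w, ⟨hw, by omega⟩, rfl⟩
    · rintro (rfl | ⟨w, ⟨hw, hlt⟩, rfl⟩)
      · exact ⟨Or.inl rfl, by omega⟩
      · exact ⟨Or.inr ⟨w, hw, rfl⟩, by omega⟩
  rw [phiF, phiF, hfil, Finset.card_insert_of_notMem (by simp),
    Finset.card_image_of_injective _ (add_left_injective 1)]
  omega

lemma pOBS_shift (X : Finset ℕ) :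
    partitionOfBetaSet (insert 0 (X.image (· + 1))) = partitionOfBetaSet X := by
  rw [pOBS_eq, pOBS_eq, shift_val]
  rw [Multiset.map_cons]
  have h0 : phiF (insert 0 (X.image (· + 1))) 0 = 0 := by simp [phiF]
  rw [h0, Multiset.filter_cons_of_neg _ (by simp), Multiset.map_map]
  congr 1
  exact Multiset.map_congr rfl (fun x _ => phi_shift X x)

lemma h1c_shift (X : Finset ℕ) (n : ℕ) :
    h1c (insert 0 (X.image (· + 1))) n = h1c X n := by
  rcases Nat.eq_zero_or_pos n with rfl | hn
  · simp [h1c]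
  set Y : Finset ℕ := insert 0 (X.image (· + 1)) with hY
  have hmemY : ∀ z, z ∈ Y ↔ z = 0 ∨ ∃ w ∈ X, w + 1 = z := by
    intro z; simp [hY]
  unfold h1c
  apply Finset.card_nbij' (fun z => z - 1) (fun x => x + 1)
  · intro z hz
    simp only [Finset.mem_coe, Finset.mem_filter] at hz ⊢
    obtain ⟨hzY, _, hnz, hznY⟩ := hz
    rcases (hmemY z).1 hzY with rfl | ⟨w, hw, rfl⟩
    · omega
    · have hwn : n ≤ w := by
        by_contra hc
        have : w + 1 - n = 0 := by omega
        exact hznY (by rw [this]; exact (hmemY 0).2 (Or.inl rfl))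
      have : w + 1 - 1 = w := by omega
      rw [this]
      refine ⟨hw, hn, hwn, fun hc => hznY ?_⟩
      exact (hmemY (w + 1 - n)).2 (Or.inr ⟨w - n, hc, by omega⟩)
  · intro x hx
    simp only [Finset.mem_coe, Finset.mem_filter] at hx ⊢
    obtain ⟨hxX, _, hnx, hxnX⟩ := hx
    refine ⟨(hmemY _).2 (Or.inr ⟨x, hxX, rfl⟩), hn, by omega, fun hc => ?_⟩
    rcases (hmemY _).1 hc with h | ⟨w, hw, hweq⟩
    · omega
    · have : w = x - n := by omega
      exact hxnX (this ▸ hw)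
  · intro z hz; beta_reduce
    simp only [Finset.mem_coe, Finset.mem_filter] at hz
    rcases (hmemY z).1 hz.1 with rfl | ⟨w, hw, rfl⟩
    · omega
    · omega
  · intro x _; beta_reduce; omega

lemma unshift_eq {X : Finset ℕ} (h0 : 0 ∈ X) :
    insert 0 (((X.erase 0).image (· - 1)).image (· + 1)) = X := by
  ext z
  simp only [Finset.mem_insert, Finset.mem_image, Finset.mem_erase]
  constructor
  · rintro (rfl | ⟨w, ⟨v, ⟨hv0, hvX⟩, rfl⟩, rfl⟩)
    · exact h0
    · have : v - 1 + 1 = v := by omega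
      rw [this]; exact hvX
  · intro hz
    rcases Nat.eq_zero_or_pos z with rfl | hzpos
    · exact Or.inl rfl
    · exact Or.inr ⟨z - 1, ⟨z, ⟨by omega, hz⟩, rfl⟩, by omega⟩

lemma phi_pos {X : Finset ℕ} (h0 : 0 ∉ X) {x : ℕ} (hx : x ∈ X) : 0 < phiF X x := by
  have hxpos : 0 < x := Nat.pos_of_ne_zero (fun h => h0 (h ▸ hx))
  have hsub : X.filter (· < x) ⊆ Finset.Ioo 0 x := by
    intro y hy
    simp only [Finset.mem_filter] at hy
    simp only [Finset.mem_Ioo]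
    exact ⟨Nat.pos_of_ne_zero (fun h => h0 (h ▸ hy.1)), hy.2⟩
  have := Finset.card_le_card hsub
  rw [Nat.card_Ioo] at this
  unfold phiF
  omega

lemma phi_le_max {X : Finset ℕ} (hne : X.Nonempty) {x : ℕ} (hx : x ∈ X) :
    phiF X x ≤ phiF X (X.max' hne) := by
  set a := X.max' hne with ha
  have hxa : x ≤ a := Finset.le_max' X x hx
  have hcx : (X.filter (· < x)).card ≤ x := by
    have : X.filter (· < x) ⊆ Finset.range x := by
      intro y hy; simp only [Finset.mem_filter] at hy; simp [hy.2]
    simpa using Finset.card_le_card this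
  have hsplit : (X.filter (· < a)).card ≤ (X.filter (· < x)).card + (a - x) := by
    have hsub : X.filter (· < a) ⊆ (X.filter (· < x)) ∪ Finset.Ico x a := by
      intro y hy
      simp only [Finset.mem_filter, Finset.mem_union, Finset.mem_Ico] at hy ⊢
      rcases Nat.lt_or_ge y x with h | h
      · exact Or.inl ⟨hy.1, h⟩
      · exact Or.inr ⟨h, hy.2⟩
    calc (X.filter (· < a)).card ≤ _ := Finset.card_le_card hsub
      _ ≤ (X.filter (· < x)).card + (Finset.Ico x a).card := Finset.card_union_le _ _
      _ = (X.filter (· < x)).card + (a - x) := by rw [Nat.card_Ico]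
  unfold phiF
  omega

lemma phi_max {X : Finset ℕ} (hne : X.Nonempty) :
    phiF X (X.max' hne) = X.max' hne - (X.card - 1) := by
  have : X.filter (· < X.max' hne) = X.erase (X.max' hne) := by
    ext y
    simp only [Finset.mem_filter, Finset.mem_erase]
    constructor
    · rintro ⟨hy, hlt⟩; exact ⟨by omega, hy⟩
    · rintro ⟨hne', hy⟩
      exact ⟨hy, lt_of_le_of_ne (Finset.le_max' X y hy) hne'⟩
  rw [phiF, this, Finset.card_erase_of_mem (X.max'_mem hne)]

lemma phi_erase {X : Finset ℕ} (hne : X.Nonempty) {y : ℕ} (hy : y ∈ X.erase (X.max' hne)) :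
    phiF (X.erase (X.max' hne)) y = phiF X y := by
  have hya : y < X.max' hne := by
    rcases Finset.mem_erase.1 hy with ⟨hne', hyX⟩
    exact lt_of_le_of_ne (Finset.le_max' X y hyX) hne'
  have : (X.erase (X.max' hne)).filter (· < y) = X.filter (· < y) := by
    ext z
    simp only [Finset.mem_filter, Finset.mem_erase]
    constructor
    · rintro ⟨⟨_, hz⟩, hlt⟩; exact ⟨hz, hlt⟩
    · rintro ⟨hz, hlt⟩; exact ⟨⟨by omega, hz⟩, hlt⟩
  rw [phiF, phiF, this]

lemma inj_aux : ∀ (N : ℕ) (X Y : Finset ℕ), X.card ≤ N → 0 ∉ X → 0 ∉ Y →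
    X.val.map (phiF X) = Y.val.map (phiF Y) → X = Y := by
  intro N
  induction N with
  | zero =>
    intro X Y hcard _ _ heq
    have hX : X = ∅ := Finset.card_eq_zero.1 (by omega)
    subst hX
    have : Y.val.map (phiF Y) = 0 := by simpa using heq.symm
    have : Y.val = 0 := by simpa using Multiset.map_eq_zero.1 this
    exact (Finset.val_eq_zero.1 this).symm
  | succ N ih =>
    intro X Y hcard h0X h0Y heq
    rcases Finset.eq_empty_or_nonempty X with rfl | hneX
    · have : Y.val.map (phiF Y) = 0 := by simpa using heq.symm
      have : Y.val = 0 := by simpa using Multiset.map_eq_zero.1 this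
      exact (Finset.val_eq_zero.1 this).symm
    have hcards : X.card = Y.card := by
      have := congrArg Multiset.card heq
      simpa using this
    have hneY : Y.Nonempty := by
      rw [← Finset.card_pos, ← hcards, Finset.card_pos]; exact hneX
    set a := X.max' hneX with ha
    set b := Y.max' hneY with hb
    -- phiF X a = phiF Y b
    have hmemXa : phiF X a ∈ Y.val.map (phiF Y) := by
      rw [← heq]
      exact Multiset.mem_map_of_mem _ (X.max'_mem hneX)
    obtain ⟨y, hyY, hyeq⟩ := Multiset.mem_map.1 hmemXa
    have h1 : phiF X a ≤ phiF Y b := hyeq ▸ phi_le_max hneY hyY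
    have hmemYb : phiF Y b ∈ X.val.map (phiF X) := by
      rw [heq]
      exact Multiset.mem_map_of_mem _ (Y.max'_mem hneY)
    obtain ⟨x, hxX, hxeq⟩ := Multiset.mem_map.1 hmemYb
    have h2 : phiF Y b ≤ phiF X a := hxeq ▸ phi_le_max hneX hxX
    have hphieq : phiF X a = phiF Y b := le_antisymm h1 h2
    have hposa : 0 < phiF X a := phi_pos h0X (X.max'_mem hneX)
    have hab : a = b := by
      have e1 := phi_max hneX
      have e2 := phi_max hneY
      rw [← ha] at e1; rw [← hb] at e2
      have hsize : 1 ≤ X.card := Finset.card_pos.2 hneX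
      have haN : X.card - 1 ≤ a := by
        by_contra hc
        rw [e1] at hposa
        omega
      have hbN : Y.card - 1 ≤ b := by
        have hposb : 0 < phiF Y b := phi_pos h0Y (Y.max'_mem hneY)
        rw [e2] at hposb
        omega
      omega
    -- erase and recurse
    set X' := X.erase a with hX'
    set Y' := Y.erase b with hY'
    have hvalX : X.val = a ::ₘ X'.val := by
      rw [hX', Finset.erase_val, Multiset.cons_erase ((X.max'_mem hneX))]
    have hvalY : Y.val = b ::ₘ Y'.val := by
      rw [hY', Finset.erase_val, Multiset.cons_erase ((Y.max'_mem hneY))]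
    have heq' : X'.val.map (phiF X') = Y'.val.map (phiF Y') := by
      have eX : X.val.map (phiF X) = phiF X a ::ₘ X'.val.map (phiF X') := by
        rw [hvalX, Multiset.map_cons]
        congr 1
        exact (Multiset.map_congr rfl (fun y hy => (phi_erase hneX hy))).symm
      have eY : Y.val.map (phiF Y) = phiF Y b ::ₘ Y'.val.map (phiF Y') := by
        rw [hvalY, Multiset.map_cons]
        congr 1
        exact (Multiset.map_congr rfl (fun y hy => (phi_erase hneY hy))).symm
      rw [eX, eY, hphieq] at heq
      exact (Multiset.cons_inj_right _).1 heq
    have hX'card : X'.card ≤ N := by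
      rw [hX', Finset.card_erase_of_mem (X.max'_mem hneX)]
      omega
    have h0X' : 0 ∉ X' := fun h => h0X (Finset.mem_of_mem_erase h)
    have h0Y' : 0 ∉ Y' := fun h => h0Y (Finset.mem_of_mem_erase h)
    have hXY' : X' = Y' := ih X' Y' hX'card h0X' h0Y' heq'
    have : insert a X' = insert b Y' := by rw [hab, hXY']
    rwa [hX', hY', Finset.insert_erase (X.max'_mem hneX),
      Finset.insert_erase (Y.max'_mem hneY)] at this

lemma pOBS_h1c : ∀ (N : ℕ) (X Y : Finset ℕ), X.card + Y.card ≤ N →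
    partitionOfBetaSet X = partitionOfBetaSet Y → ∀ n, h1c X n = h1c Y n := by
  intro N
  induction N with
  | zero =>
    intro X Y hcard hp n
    have hX : X = ∅ := Finset.card_eq_zero.1 (by omega)
    have hY : Y = ∅ := Finset.card_eq_zero.1 (by omega)
    rw [hX, hY]
  | succ N ih =>
    intro X Y hcard hp n
    by_cases h0X : 0 ∈ X
    · set X₀ := (X.erase 0).image (· - 1) with hX₀
      have hXeq : insert 0 (X₀.image (· + 1)) = X := unshift_eq h0X
      have hc : X₀.card + Y.card ≤ N := by
        have h1 : X₀.card ≤ (X.erase 0).card := Finset.card_image_le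
        have h2 : (X.erase 0).card = X.card - 1 := Finset.card_erase_of_mem h0X
        have h3 : 1 ≤ X.card := Finset.card_pos.2 ⟨0, h0X⟩
        omega
      have hp' : partitionOfBetaSet X₀ = partitionOfBetaSet Y := by
        rw [← pOBS_shift X₀, hXeq]; exact hp
      rw [← hXeq, h1c_shift]
      exact ih X₀ Y hc hp' n
    by_cases h0Y : 0 ∈ Y
    · set Y₀ := (Y.erase 0).image (· - 1) with hY₀
      have hYeq : insert 0 (Y₀.image (· + 1)) = Y := unshift_eq h0Y
      have hc : X.card + Y₀.card ≤ N := by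
        have h1 : Y₀.card ≤ (Y.erase 0).card := Finset.card_image_le
        have h2 : (Y.erase 0).card = Y.card - 1 := Finset.card_erase_of_mem h0Y
        have h3 : 1 ≤ Y.card := Finset.card_pos.2 ⟨0, h0Y⟩
        omega
      have hp' : partitionOfBetaSet X = partitionOfBetaSet Y₀ := by
        rw [← pOBS_shift Y₀, hYeq]; exact hp
      rw [← hYeq, h1c_shift]
      exact ih X Y₀ hc hp' n
    · have hXY : X = Y := by
        apply inj_aux X.card X Y le_rfl h0X h0Y
        have eX : partitionOfBetaSet X = X.val.map (phiF X) := by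
          rw [pOBS_eq]
          apply Multiset.filter_eq_self.2
          intro v hv
          obtain ⟨x, hx, rfl⟩ := Multiset.mem_map.1 hv
          exact phi_pos h0X hx
        have eY : partitionOfBetaSet Y = Y.val.map (phiF Y) := by
          rw [pOBS_eq]
          apply Multiset.filter_eq_self.2
          intro v hv
          obtain ⟨x, hx, rfl⟩ := Multiset.mem_map.1 hv
          exact phi_pos h0Y hx
        rw [← eX, ← eY, hp]
      rw [hXY]

/-- Final invariance: equal β-set partitions give equal `h1c` counts. -/
lemma pOBS_h1c' {X Y : Finset ℕ} (hp : partitionOfBetaSet X = partitionOfBetaSet Y) (n : ℕ) :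
    h1c X n = h1c Y n :=
  pOBS_h1c (X.card + Y.card) X Y le_rfl hp n

def ppc (A B : Finset ℕ) (n : ℕ) : ℕ := (A.filter (fun a => a < n ∧ n - 1 - a ∈ B)).card

/-- The combined β-set of the runner pair `(A, B)` used in `barQuotComp`. -/
def Xset (A B : Finset ℕ) : Finset ℕ :=
  (A.image (fun a => (B.sup id + 1) + a)) ∪
    ((Finset.range (B.sup id + 1)).filter (fun b => b ∉ B)).image (fun b => (B.sup id + 1) - 1 - b)

lemma mem_Xset {A B : Finset ℕ} {z : ℕ} :
    z ∈ Xset A B ↔ ((B.sup id + 1) ≤ z ∧ z - (B.sup id + 1) ∈ A) ∨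
      (z < (B.sup id + 1) ∧ (B.sup id + 1) - 1 - z ∉ B) := by
  set N := B.sup id + 1 with hN
  unfold Xset
  rw [← hN]
  simp only [Finset.mem_union, Finset.mem_image, Finset.mem_filter, Finset.mem_range]
  constructor
  · rintro (⟨a, ha, rfl⟩ | ⟨b, ⟨hbN, hbB⟩, rfl⟩)
    · left; constructor
      · omega
      · have : N + a - N = a := by omega
        rw [this]; exact ha
    · right; constructor
      · omega
      · have : N - 1 - (N - 1 - b) = b := by omega
        rw [this]; exact hbB
  · rintro (⟨hNz, hzA⟩ | ⟨hzN, hzB⟩)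
    · exact Or.inl ⟨z - N, hzA, by omega⟩
    · exact Or.inr ⟨N - 1 - z, ⟨by omega, hzB⟩, by omega⟩

lemma mem_B_lt {B : Finset ℕ} {b : ℕ} (hb : b ∈ B) : b < B.sup id + 1 := by
  have : b ≤ B.sup id := Finset.le_sup (f := id) hb
  omega

lemma combined_identity (A B : Finset ℕ) (n : ℕ) :
    h1c (Xset A B) n = h1c A n + h1c B n + ppc A B n := by
  rcases Nat.eq_zero_or_pos n with rfl | hn
  · simp [h1c, ppc]
  set N := B.sup id + 1 with hN
  set X := Xset A B with hX
  have memX : ∀ z, z ∈ X ↔ (N ≤ z ∧ z - N ∈ A) ∨ (z < N ∧ N - 1 - z ∉ B) := fun z => mem_Xset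
  -- split the filtered set into three
  have hsplit : h1c X n =
      (X.filter (fun z => (0 < n ∧ n ≤ z ∧ z - n ∉ X) ∧ N + n ≤ z)).card +
      (X.filter (fun z => (0 < n ∧ n ≤ z ∧ z - n ∉ X) ∧ N ≤ z ∧ z < N + n)).card +
      (X.filter (fun z => (0 < n ∧ n ≤ z ∧ z - n ∉ X) ∧ z < N)).card := by
    unfold h1c
    have e1 := Finset.card_filter_add_card_filter_not
      (s := X.filter (fun z => 0 < n ∧ n ≤ z ∧ z - n ∉ X)) (p := fun z => N ≤ z)
    have e2 := Finset.card_filter_add_card_filter_not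
      (s := X.filter (fun z => (0 < n ∧ n ≤ z ∧ z - n ∉ X) ∧ N ≤ z)) (p := fun z => N + n ≤ z)
    simp only [Finset.filter_filter] at e1 e2
    have c1 : X.filter (fun z => ((0 < n ∧ n ≤ z ∧ z - n ∉ X) ∧ N ≤ z) ∧ N + n ≤ z)
        = X.filter (fun z => (0 < n ∧ n ≤ z ∧ z - n ∉ X) ∧ N + n ≤ z) := by
      apply Finset.filter_congr; intro z _; constructor <;> (intro h; constructor)
      · exact h.1.1
      · exact h.2
      · exact ⟨h.1, by omega⟩
      · exact h.2
    have c2 : X.filter (fun z => ((0 < n ∧ n ≤ z ∧ z - n ∉ X) ∧ N ≤ z) ∧ ¬ N + n ≤ z)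
        = X.filter (fun z => (0 < n ∧ n ≤ z ∧ z - n ∉ X) ∧ N ≤ z ∧ z < N + n) := by
      apply Finset.filter_congr; intro z _; constructor
      · intro h; exact ⟨h.1.1, h.1.2, by omega⟩
      · intro h; exact ⟨⟨h.1, h.2.1⟩, by omega⟩
    have c3 : X.filter (fun z => (0 < n ∧ n ≤ z ∧ z - n ∉ X) ∧ ¬ N ≤ z)
        = X.filter (fun z => (0 < n ∧ n ≤ z ∧ z - n ∉ X) ∧ z < N) := by
      apply Finset.filter_congr; intro z _; constructor
      · intro h; exact ⟨h.1, by omega⟩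
      · intro h; exact ⟨h.1, by omega⟩
    rw [c1, c2] at e2
    rw [c3] at e1
    omega
  rw [hsplit]
  -- part 1 : ≃ h1c A n
  have p1 : (X.filter (fun z => (0 < n ∧ n ≤ z ∧ z - n ∉ X) ∧ N + n ≤ z)).card = h1c A n := by
    unfold h1c
    apply Finset.card_nbij' (fun z => z - N) (fun a => N + a)
    · intro z hz
      simp only [Finset.mem_coe, Finset.mem_filter] at hz ⊢
      obtain ⟨hzX, ⟨_, hnz, hznX⟩, hNnz⟩ := hz
      have hzA : z - N ∈ A := by
        rcases (memX z).1 hzX with ⟨_, h⟩ | ⟨h, _⟩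
        · exact h
        · omega
      refine ⟨hzA, hn, by omega, fun hc => hznX ?_⟩
      apply (memX (z - n)).2
      left
      refine ⟨by omega, ?_⟩
      have : z - n - N = z - N - n := by omega
      rw [this]; exact hc
    · intro a ha
      simp only [Finset.mem_coe, Finset.mem_filter] at ha ⊢
      obtain ⟨haA, _, hna, hanA⟩ := ha
      have hzX : N + a ∈ X := (memX _).2 (Or.inl ⟨by omega, by simpa using haA⟩)
      refine ⟨hzX, ⟨hn, by omega, fun hc => ?_⟩, by omega⟩
      rcases (memX _).1 hc with ⟨h1, h2⟩ | ⟨h1, _⟩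
      · have : N + a - n - N = a - n := by omega
        rw [this] at h2; exact hanA h2
      · omega
    · intro z hz; beta_reduce
      simp only [Finset.mem_coe, Finset.mem_filter] at hz
      omega
    · intro a _; beta_reduce; omega
  -- part 2 : ≃ ppc A B n
  have p2 : (X.filter (fun z => (0 < n ∧ n ≤ z ∧ z - n ∉ X) ∧ N ≤ z ∧ z < N + n)).card
      = ppc A B n := by
    unfold ppc
    apply Finset.card_nbij' (fun z => z - N) (fun a => N + a)
    · intro z hz
      simp only [Finset.mem_coe, Finset.mem_filter] at hz ⊢
      obtain ⟨hzX, ⟨_, hnz, hznX⟩, hNz, hzNn⟩ := hz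
      have hzA : z - N ∈ A := by
        rcases (memX z).1 hzX with ⟨_, h⟩ | ⟨h, _⟩
        · exact h
        · omega
      refine ⟨hzA, by omega, ?_⟩
      have hznB : N - 1 - (z - n) ∈ B := by
        by_contra hc
        exact hznX ((memX (z - n)).2 (Or.inr ⟨by omega, hc⟩))
      have : n - 1 - (z - N) = N - 1 - (z - n) := by omega
      rw [this]; exact hznB
    · intro a ha
      simp only [Finset.mem_coe, Finset.mem_filter] at ha ⊢
      obtain ⟨haA, han, hB⟩ := ha
      have hbN : n - 1 - a < N := mem_B_lt hB
      have hzX : N + a ∈ X := (memX _).2 (Or.inl ⟨by omega, by simpa using haA⟩)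
      refine ⟨hzX, ⟨hn, by omega, fun hc => ?_⟩, by omega, by omega⟩
      rcases (memX _).1 hc with ⟨h1, _⟩ | ⟨_, h2⟩
      · omega
      · have : N - 1 - (N + a - n) = n - 1 - a := by omega
        rw [this] at h2; exact h2 hB
    · intro z hz; beta_reduce
      simp only [Finset.mem_coe, Finset.mem_filter] at hz
      omega
    · intro a _; beta_reduce; omega
  -- part 3 : ≃ h1c B n
  have p3 : (X.filter (fun z => (0 < n ∧ n ≤ z ∧ z - n ∉ X) ∧ z < N)).card = h1c B n := by
    unfold h1c
    apply Finset.card_nbij' (fun z => (N - 1 - z) + n) (fun c => N - 1 - (c - n))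
    · intro z hz
      simp only [Finset.mem_coe, Finset.mem_filter] at hz ⊢
      obtain ⟨hzX, ⟨_, hnz, hznX⟩, hzN⟩ := hz
      have hc : N - 1 - (z - n) ∈ B := by
        by_contra hcon
        exact hznX ((memX (z - n)).2 (Or.inr ⟨by omega, hcon⟩))
      have hzB : N - 1 - z ∉ B := by
        rcases (memX z).1 hzX with ⟨h, _⟩ | ⟨_, h⟩
        · omega
        · exact h
      have e : N - 1 - z + n = N - 1 - (z - n) := by omega
      rw [e]
      refine ⟨hc, hn, by omega, ?_⟩
      have e2 : N - 1 - (z - n) - n = N - 1 - z := by omega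
      rw [e2]; exact hzB
    · intro c hc
      simp only [Finset.mem_coe, Finset.mem_filter] at hc ⊢
      obtain ⟨hcB, _, hnc, hcnB⟩ := hc
      have hcN : c < N := mem_B_lt hcB
      have hzX : N - 1 - (c - n) ∈ X := by
        apply (memX _).2
        right
        refine ⟨by omega, ?_⟩
        have : N - 1 - (N - 1 - (c - n)) = c - n := by omega
        rw [this]; exact hcnB
      refine ⟨hzX, ⟨hn, by omega, fun hcon => ?_⟩, by omega⟩
      rcases (memX _).1 hcon with ⟨h1, _⟩ | ⟨_, h2⟩
      · omega
      · have : N - 1 - (N - 1 - (c - n) - n) = c := by omega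
        rw [this] at h2; exact h2 hcB
    · intro z hz; beta_reduce
      simp only [Finset.mem_coe, Finset.mem_filter] at hz
      omega
    · intro c hc; beta_reduce
      simp only [Finset.mem_coe, Finset.mem_filter] at hc
      have := mem_B_lt hc.1
      omega
  rw [p1, p2, p3]
  omega
def c2 (t : Finset ℕ) (n : ℕ) : ℕ := (t.filter (fun a => n - a < a ∧ a ≤ n ∧ n - a ∈ t)).card


lemma sum_map_ite (s : Multiset ℕ) (p : ℕ → Prop) [DecidablePred p] :
    (s.map (fun a => if p a then 1 else 0)).sum = Multiset.card (s.filter p) := by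
  induction s using Multiset.induction_on with
  | empty => simp
  | cons a s ih =>
    rw [Multiset.map_cons, Multiset.sum_cons, Multiset.filter_cons, ih]
    by_cases h : p a <;> simp [h] <;> omega

lemma count_bar (t : Finset ℕ) (n : ℕ) :
    (barMultisetF t).count n = h1c t n + c2 t n := by
  unfold barMultisetF
  rw [Multiset.count_add, Multiset.count_bind, Multiset.count_bind]
  have e1 : (t.val.map (fun a =>
      Multiset.count n (((Multiset.range a).map (· + 1)).filter (fun h => a - h ∉ t)))).sum
      = h1c t n := by
    have hmc : ∀ a, Multiset.count n (((Multiset.range a).map (· + 1)).filter (fun h => a - h ∉ t))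
        = if (0 < n ∧ n ≤ a ∧ a - n ∉ t) then 1 else 0 := by
      intro a
      have hnd : (((Multiset.range a).map (· + 1)).filter (fun h => a - h ∉ t)).Nodup :=
        (((Multiset.nodup_range a).map (fun x y => by omega)).filter _)
      have hmem : n ∈ ((Multiset.range a).map (· + 1)).filter (fun h => a - h ∉ t)
          ↔ (0 < n ∧ n ≤ a ∧ a - n ∉ t) := by
        simp only [Multiset.mem_filter, Multiset.mem_map, Multiset.mem_range]
        constructor
        · rintro ⟨⟨y, hy, rfl⟩, hnt⟩
          exact ⟨by omega, by omega, hnt⟩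
        · rintro ⟨h1, h2, h3⟩
          exact ⟨⟨n - 1, by omega, by omega⟩, h3⟩
      by_cases h : 0 < n ∧ n ≤ a ∧ a - n ∉ t
      · rw [if_pos h]; exact Multiset.count_eq_one_of_mem hnd (hmem.2 h)
      · rw [if_neg h]; exact Multiset.count_eq_zero_of_notMem (fun hc => h (hmem.1 hc))
    rw [Multiset.map_congr rfl (fun a _ => hmc a), sum_map_ite]
    rw [h1c, Finset.card_def, Finset.filter_val]
  have e2 : (t.val.map (fun a =>
      Multiset.count n ((t.filter (fun b => b < a)).val.map (fun b => a + b)))).sum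
      = c2 t n := by
    have hmc : ∀ a, Multiset.count n ((t.filter (fun b => b < a)).val.map (fun b => a + b))
        = if (n - a < a ∧ a ≤ n ∧ n - a ∈ t) then 1 else 0 := by
      intro a
      have hnd : ((t.filter (fun b => b < a)).val.map (fun b => a + b)).Nodup :=
        (t.filter (fun b => b < a)).nodup.map (fun x y => by omega)
      have hmem : n ∈ (t.filter (fun b => b < a)).val.map (fun b => a + b)
          ↔ (n - a < a ∧ a ≤ n ∧ n - a ∈ t) := by
        simp only [Multiset.mem_map, Finset.mem_val, Finset.mem_filter]
        constructor
        · rintro ⟨b, ⟨hb, hba⟩, rfl⟩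
          refine ⟨by omega, by omega, ?_⟩
          have : a + b - a = b := by omega
          rw [this]; exact hb
        · rintro ⟨h1, h2, h3⟩
          exact ⟨n - a, ⟨h3, h1⟩, by omega⟩
      by_cases h : n - a < a ∧ a ≤ n ∧ n - a ∈ t
      · rw [if_pos h]; exact Multiset.count_eq_one_of_mem hnd (hmem.2 h)
      · rw [if_neg h]; exact Multiset.count_eq_zero_of_notMem (fun hc => h (hmem.1 hc))
    rw [Multiset.map_congr rfl (fun a _ => hmc a), sum_map_ite]
    rw [c2, Finset.card_def, Finset.filter_val]
  rw [e1, e2]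


section Arith
variable {d : ℕ}

lemma runner_mem (hd : 0 < d) {i : ℕ} (hi : i < d) {t : Finset ℕ} {k : ℕ} :
    k ∈ runnerSet d i t ↔ d * k + i ∈ t := by
  unfold runnerSet
  simp only [Finset.mem_image, Finset.mem_filter]
  constructor
  · rintro ⟨a, ⟨ha, hmod⟩, rfl⟩
    have : d * (a / d) + i = a := by
      conv_rhs => rw [← Nat.div_add_mod a d]
      rw [hmod]
    rwa [this]
  · intro h
    refine ⟨d * k + i, ⟨h, ?_⟩, ?_⟩
    · rw [Nat.mul_add_mod, Nat.mod_eq_of_lt hi]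
    · rw [Nat.mul_add_div hd, Nat.div_eq_of_lt hi, Nat.add_zero]

lemma mul_le_add_iff {i : ℕ} (hi : i < d) (m k : ℕ) : d * m ≤ d * k + i ↔ m ≤ k := by
  constructor
  · intro h
    by_contra hc
    push_neg at hc
    obtain ⟨e, rfl⟩ : ∃ e, m = k + 1 + e := ⟨m - k - 1, by omega⟩
    rw [Nat.mul_add, Nat.mul_add, Nat.mul_one] at h
    omega
  · intro h
    calc d * m ≤ d * k := Nat.mul_le_mul_left d h
      _ ≤ d * k + i := by omega

lemma sub_res {i : ℕ} (m k : ℕ) (h : m ≤ k) : (d * k + i) - d * m = d * (k - m) + i := by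
  obtain ⟨e, rfl⟩ : ∃ e, k = m + e := ⟨k - m, by omega⟩
  rw [Nat.mul_add]
  have : m + e - m = e := by omega
  rw [this]
  omega

lemma sub_cross {i : ℕ} (hi0 : 0 < i) (hi : i < d) {k m' : ℕ} (hk : k < m') :
    d * m' - (d * k + i) = d * (m' - 1 - k) + (d - i) := by
  obtain ⟨e, rfl⟩ : ∃ e, m' = k + 1 + e := ⟨m' - k - 1, by omega⟩
  have h1 : k + 1 + e - 1 - k = e := by omega
  rw [h1, Nat.mul_add, Nat.mul_add, Nat.mul_one]
  omega

lemma add_lt_mul {i : ℕ} (hi : i < d) {k m' : ℕ} (hk : k < m') : d * k + i < d * m' := by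
  calc d * k + i < d * k + d := by omega
    _ = d * (k + 1) := by rw [Nat.mul_add, Nat.mul_one]
    _ ≤ d * m' := Nat.mul_le_mul_left d hk

lemma lt_of_add_le {i : ℕ} (hi0 : 0 < i) {k m' : ℕ} (h : d * k + i ≤ d * m') : k < m' := by
  by_contra hc
  push_neg at hc
  have := Nat.mul_le_mul_left d hc
  omega

end Arith
section Decomp
variable {d : ℕ}

lemma h1c_res (hd0 : 0 < d) {i : ℕ} (hi : i < d) (t : Finset ℕ) (m' : ℕ) :
    ((t.filter (fun a => 0 < d * m' ∧ d * m' ≤ a ∧ a - d * m' ∉ t)).filter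
      (fun a => a % d = i)).card = h1c (runnerSet d i t) m' := by
  unfold h1c
  apply Finset.card_nbij' (fun a => a / d) (fun k => d * k + i)
  · intro a ha
    simp only [Finset.mem_coe, Finset.mem_filter] at ha ⊢
    obtain ⟨⟨hat, hpos, hle, hnot⟩, hmod⟩ := ha
    have hak : d * (a / d) + i = a := by
      conv_rhs => rw [← Nat.div_add_mod a d]
      rw [hmod]
    have hm' : 0 < m' := Nat.pos_of_ne_zero (fun h => by simp [h] at hpos)
    have hmle : m' ≤ a / d := (mul_le_add_iff hi m' (a / d)).1 (by omega)
    refine ⟨(runner_mem hd0 hi).2 (by rwa [hak]), hm', hmle, fun hc => ?_⟩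
    have := (runner_mem hd0 hi).1 hc
    rw [← sub_res m' (a / d) hmle, hak] at this
    exact hnot this
  · intro k hk
    simp only [Finset.mem_coe, Finset.mem_filter] at hk ⊢
    obtain ⟨hkR, hm', hmk, hknot⟩ := hk
    refine ⟨⟨(runner_mem hd0 hi).1 hkR, Nat.mul_pos hd0 hm',
      (mul_le_add_iff hi m' k).2 hmk, ?_⟩, ?_⟩
    · rw [sub_res m' k hmk]
      exact fun hc => hknot ((runner_mem hd0 hi).2 hc)
    · rw [Nat.mul_add_mod, Nat.mod_eq_of_lt hi]
  · intro a ha; beta_reduce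
    simp only [Finset.mem_coe, Finset.mem_filter] at ha
    conv_rhs => rw [← Nat.div_add_mod a d]
    rw [ha.2]
  · intro k _; beta_reduce
    rw [Nat.mul_add_div hd0, Nat.div_eq_of_lt hi, Nat.add_zero]

lemma mul_sub' {d k m' : ℕ} (h : k ≤ m') : d * m' - d * k = d * (m' - k) := by
  obtain ⟨e, rfl⟩ : ∃ e, m' = k + e := ⟨m' - k, by omega⟩
  rw [Nat.mul_add]
  have : k + e - k = e := by omega
  rw [this]
  omega

lemma c2_res0 (hd0 : 0 < d) (t : Finset ℕ) (m' : ℕ) :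
    ((t.filter (fun a => d * m' - a < a ∧ a ≤ d * m' ∧ d * m' - a ∈ t)).filter
      (fun a => a % d = 0)).card = c2 (runnerSet d 0 t) m' := by
  unfold c2
  have hrm : ∀ {k : ℕ} {u : Finset ℕ}, k ∈ runnerSet d 0 u ↔ d * k ∈ u := by
    intro k u
    rw [runner_mem hd0 hd0, Nat.add_zero]
  apply Finset.card_nbij' (fun a => a / d) (fun k => d * k)
  · intro a ha
    simp only [Finset.mem_coe, Finset.mem_filter] at ha ⊢
    obtain ⟨⟨hat, hlt, hle, hmem⟩, hmod⟩ := ha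
    have hak : d * (a / d) = a := by
      conv_rhs => rw [← Nat.div_add_mod a d]
      rw [hmod, Nat.add_zero]
    have hkle : a / d ≤ m' := by
      by_contra hc
      push_neg at hc
      have h1 : d * (m' + 1) ≤ d * (a / d) := Nat.mul_le_mul_left d hc
      rw [hak] at h1
      rw [Nat.mul_add, Nat.mul_one] at h1
      omega
    have hsub : d * m' - a = d * (m' - a / d) := by
      conv_lhs => rw [← hak]
      exact mul_sub' hkle
    have h3 : d * (m' - a / d) ∈ t := by rwa [← hsub]
    have h4 : d * (a / d) ∈ t := by rwa [hak]
    refine ⟨hrm.2 h4, ?_, hkle, hrm.2 h3⟩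
    exact (Nat.mul_lt_mul_left hd0).1 (by omega)
  · intro k hk
    simp only [Finset.mem_coe, Finset.mem_filter] at hk ⊢
    obtain ⟨hkR, hlt, hle, hmem⟩ := hk
    have hsub : d * m' - d * k = d * (m' - k) := mul_sub' hle
    refine ⟨⟨hrm.1 hkR, ?_, ?_, ?_⟩, ?_⟩
    · rw [hsub]
      exact (Nat.mul_lt_mul_left hd0).2 hlt
    · exact Nat.mul_le_mul_left d hle
    · rw [hsub]
      exact hrm.1 hmem
    · simp [Nat.mul_mod_right]
  · intro a ha; beta_reduce
    simp only [Finset.mem_coe, Finset.mem_filter] at ha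
    conv_rhs => rw [← Nat.div_add_mod a d]
    rw [ha.2, Nat.add_zero]
  · intro k _; beta_reduce
    rw [Nat.mul_div_cancel_left k hd0]

end Decomp
section Cross
variable {d : ℕ}

lemma c2_cross (hd0 : 0 < d) {i : ℕ} (hi0 : 0 < i) (hi2 : 2 * i < d) (t : Finset ℕ) (m' : ℕ) :
    ((t.filter (fun a => d * m' - a < a ∧ a ≤ d * m' ∧ d * m' - a ∈ t)).filter
        (fun a => a % d = i)).card
      + ((t.filter (fun a => d * m' - a < a ∧ a ≤ d * m' ∧ d * m' - a ∈ t)).filter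
        (fun a => a % d = d - i)).card
      = ppc (runnerSet d i t) (runnerSet d (d - i) t) m' := by
  have hi : i < d := by omega
  have hj0 : 0 < d - i := by omega
  have hj : d - i < d := by omega
  have hrmi : ∀ {k : ℕ}, k ∈ runnerSet d i t ↔ d * k + i ∈ t := fun {k} => runner_mem hd0 hi
  have hrmj : ∀ {k : ℕ}, k ∈ runnerSet d (d - i) t ↔ d * k + (d - i) ∈ t :=
    fun {k} => runner_mem hd0 hj
  have hsplit := Finset.card_filter_add_card_filter_not
    (s := (runnerSet d i t).filter (fun k => k < m' ∧ m' - 1 - k ∈ runnerSet d (d - i) t))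
    (p := fun k => d * m' - (d * k + i) < d * k + i)
  rw [Finset.filter_filter, Finset.filter_filter] at hsplit
  have b1 : ((t.filter (fun a => d * m' - a < a ∧ a ≤ d * m' ∧ d * m' - a ∈ t)).filter
      (fun a => a % d = i)).card
      = ((runnerSet d i t).filter (fun k => (k < m' ∧ m' - 1 - k ∈ runnerSet d (d - i) t)
          ∧ d * m' - (d * k + i) < d * k + i)).card := by
    apply Finset.card_nbij' (fun a => a / d) (fun k => d * k + i)
    · intro a ha
      simp only [Finset.mem_coe, Finset.mem_filter] at ha ⊢
      obtain ⟨⟨hat, hlt, hle, hmem⟩, hmod⟩ := ha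
      have hak : d * (a / d) + i = a := by
        conv_rhs => rw [← Nat.div_add_mod a d]
        rw [hmod]
      have hk : a / d < m' := lt_of_add_le hi0 (by rw [hak]; exact hle)
      have hsub : d * m' - a = d * (m' - 1 - a / d) + (d - i) := by
        conv_lhs => rw [← hak]
        exact sub_cross hi0 hi hk
      have h4 : d * (a / d) + i ∈ t := by rwa [hak]
      have h5 : d * (m' - 1 - a / d) + (d - i) ∈ t := by rwa [← hsub]
      refine ⟨hrmi.2 h4, ⟨hk, hrmj.2 h5⟩, ?_⟩
      rw [hak]
      exact hlt
    · intro k hk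
      simp only [Finset.mem_coe, Finset.mem_filter] at hk ⊢
      obtain ⟨hkR, ⟨hkm, hkq⟩, hQ⟩ := hk
      have hsub : d * m' - (d * k + i) = d * (m' - 1 - k) + (d - i) := sub_cross hi0 hi hkm
      refine ⟨⟨hrmi.1 hkR, hQ, (add_lt_mul hi hkm).le, ?_⟩, ?_⟩
      · rw [hsub]
        exact hrmj.1 hkq
      · rw [Nat.mul_add_mod, Nat.mod_eq_of_lt hi]
    · intro a ha; beta_reduce
      simp only [Finset.mem_coe, Finset.mem_filter] at ha
      conv_rhs => rw [← Nat.div_add_mod a d]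
      rw [ha.2]
    · intro k _; beta_reduce
      rw [Nat.mul_add_div hd0, Nat.div_eq_of_lt hi, Nat.add_zero]
  have b2 : ((t.filter (fun a => d * m' - a < a ∧ a ≤ d * m' ∧ d * m' - a ∈ t)).filter
      (fun a => a % d = d - i)).card
      = ((runnerSet d i t).filter (fun k => (k < m' ∧ m' - 1 - k ∈ runnerSet d (d - i) t)
          ∧ ¬ (d * m' - (d * k + i) < d * k + i))).card := by
    apply Finset.card_nbij' (fun a => (d * m' - a) / d) (fun k => d * m' - (d * k + i))
    · intro a ha
      simp only [Finset.mem_coe, Finset.mem_filter] at ha ⊢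
      obtain ⟨⟨hat, hlt, hle, hmem⟩, hmod⟩ := ha
      have haj : d * (a / d) + (d - i) = a := by
        conv_rhs => rw [← Nat.div_add_mod a d]
        rw [hmod]
      have hka : a / d < m' := lt_of_add_le hj0 (by rw [haj]; exact hle)
      have hsub : d * m' - a = d * (m' - 1 - a / d) + i := by
        conv_lhs => rw [← haj]
        rw [sub_cross hj0 hj hka]
        congr 1
        omega
      have hkdiv : (d * m' - a) / d = m' - 1 - a / d := by
        rw [hsub, Nat.mul_add_div hd0, Nat.div_eq_of_lt hi, Nat.add_zero]
      have h4 : d * ((d * m' - a) / d) + i ∈ t := by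
        rw [hkdiv, ← hsub]
        exact hmem
      have he : m' - 1 - ((d * m' - a) / d) = a / d := by
        rw [hkdiv]
        generalize a / d = u at hka ⊢
        omega
      have h5 : d * (a / d) + (d - i) ∈ t := by rwa [haj]
      refine ⟨hrmi.2 h4, ⟨by rw [hkdiv]; generalize a / d = u at hka ⊢; omega,
        by rw [he]; exact hrmj.2 h5⟩, ?_⟩
      intro hQ
      have hbv : d * ((d * m' - a) / d) + i = d * m' - a := by rw [hkdiv, ← hsub]
      rw [hbv] at hQ
      omega
    · intro k hk
      simp only [Finset.mem_coe, Finset.mem_filter] at hk ⊢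
      obtain ⟨hkR, ⟨hkm, hkq⟩, hnQ⟩ := hk
      have hsub : d * m' - (d * k + i) = d * (m' - 1 - k) + (d - i) := sub_cross hi0 hi hkm
      have hblt : d * k + i < d * m' := add_lt_mul hi hkm
      have hna : d * m' - (d * m' - (d * k + i)) = d * k + i := by omega
      have hm2 : (d * m' - (d * k + i)) % d = d - i := by
        rw [hsub, Nat.mul_add_mod, Nat.mod_eq_of_lt hj]
      have hne : d * k + i ≠ d * m' - (d * k + i) := by
        intro h
        have hm1 : (d * k + i) % d = i := by rw [Nat.mul_add_mod, Nat.mod_eq_of_lt hi]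
        rw [h, hm2] at hm1
        omega
      refine ⟨⟨?_, ?_, Nat.sub_le _ _, ?_⟩, hm2⟩
      · rw [hsub]
        exact hrmj.1 hkq
      · rw [hna]
        omega
      · rw [hna]
        exact hrmi.1 hkR
    · intro a ha; beta_reduce
      simp only [Finset.mem_coe, Finset.mem_filter] at ha
      obtain ⟨⟨hat, hlt, hle, hmem⟩, hmod⟩ := ha
      have haj : d * (a / d) + (d - i) = a := by
        conv_rhs => rw [← Nat.div_add_mod a d]
        rw [hmod]
      have hka : a / d < m' := lt_of_add_le hj0 (by rw [haj]; exact hle)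
      have hsub : d * m' - a = d * (m' - 1 - a / d) + i := by
        conv_lhs => rw [← haj]
        rw [sub_cross hj0 hj hka]
        congr 1
        omega
      have hkdiv : (d * m' - a) / d = m' - 1 - a / d := by
        rw [hsub, Nat.mul_add_div hd0, Nat.div_eq_of_lt hi, Nat.add_zero]
      have hbv : d * ((d * m' - a) / d) + i = d * m' - a := by rw [hkdiv, ← hsub]
      rw [hbv]
      omega
    · intro k hk; beta_reduce
      simp only [Finset.mem_coe, Finset.mem_filter] at hk
      obtain ⟨hkR, ⟨hkm, _⟩, _⟩ := hk
      have hblt : d * k + i < d * m' := add_lt_mul hi hkm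
      have hna : d * m' - (d * m' - (d * k + i)) = d * k + i := by omega
      rw [hna, Nat.mul_add_div hd0, Nat.div_eq_of_lt hi, Nat.add_zero]
  rw [b1, b2, ppc, ← hsplit]

end Cross
section Final
variable {d : ℕ}

lemma regroup (hd3 : 3 ≤ d) (hodd : Odd d) (G : ℕ → ℕ) :
    ∑ i ∈ Finset.range d, G i = G 0 + ∑ i ∈ Finset.Ioc 0 ((d - 1) / 2), (G i + G (d - i)) := by
  obtain ⟨m, rfl⟩ := hodd
  have hm : (2 * m + 1 - 1) / 2 = m := by omega
  rw [hm]
  have h1 : Finset.range (2 * m + 1) = insert 0 (Finset.Ioc 0 (2 * m)) := by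
    ext x
    simp only [Finset.mem_range, Finset.mem_insert, Finset.mem_Ioc]
    omega
  rw [h1, Finset.sum_insert (by simp)]
  congr 1
  rw [Finset.sum_add_distrib]
  have h2 := Finset.sum_Ioc_consecutive G (by omega : (0:ℕ) ≤ m) (by omega : m ≤ 2 * m)
  rw [← h2]
  congr 1
  apply Finset.sum_nbij' (fun i => 2 * m + 1 - i) (fun i => 2 * m + 1 - i)
  · intro a ha
    simp only [Finset.mem_Ioc] at ha ⊢
    omega
  · intro a ha
    simp only [Finset.mem_Ioc] at ha ⊢
    omega
  · intro a ha
    simp only [Finset.mem_Ioc] at ha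
    omega
  · intro a ha
    simp only [Finset.mem_Ioc] at ha
    omega
  · intro a ha
    simp only [Finset.mem_Ioc] at ha
    congr 1
    omega

lemma decomp (hd3 : 3 ≤ d) (hodd : Odd d) (t : Finset ℕ) (m' : ℕ) :
    h1c t (d * m') + c2 t (d * m') =
      (h1c (runnerSet d 0 t) m' + c2 (runnerSet d 0 t) m')
      + ∑ i ∈ Finset.Ioc 0 ((d - 1) / 2),
          (h1c (runnerSet d i t) m' + h1c (runnerSet d (d - i) t) m'
            + ppc (runnerSet d i t) (runnerSet d (d - i) t) m') := by
  have hd0 : 0 < d := by omega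
  have f1 : h1c t (d * m') = ∑ i ∈ Finset.range d,
      ((t.filter (fun a => 0 < d * m' ∧ d * m' ≤ a ∧ a - d * m' ∉ t)).filter
        (fun a => a % d = i)).card := by
    rw [h1c]
    exact Finset.card_eq_sum_card_fiberwise (fun x _ => Finset.mem_range.2 (Nat.mod_lt x hd0))
  have f2 : c2 t (d * m') = ∑ i ∈ Finset.range d,
      ((t.filter (fun a => d * m' - a < a ∧ a ≤ d * m' ∧ d * m' - a ∈ t)).filter
        (fun a => a % d = i)).card := by
    rw [c2]
    exact Finset.card_eq_sum_card_fiberwise (fun x _ => Finset.mem_range.2 (Nat.mod_lt x hd0))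
  rw [f1, f2, ← Finset.sum_add_distrib]
  rw [regroup hd3 hodd]
  congr 1
  · rw [h1c_res hd0 hd0 t m', c2_res0 hd0 t m']
  · apply Finset.sum_congr rfl
    intro i hi
    simp only [Finset.mem_Ioc] at hi
    have hi0 : 0 < i := hi.1
    have hi2 : 2 * i < d := by
      have := hi.2
      omega
    have hilt : i < d := by omega
    have hjlt : d - i < d := by omega
    rw [h1c_res hd0 hilt t m', h1c_res hd0 hjlt t m', ← c2_cross hd0 hi0 hi2 t m']
    omega

end Final

/-- the multisets of bar lengths divisible by `d` of `λ` and of its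
`d̄`-quotient partition coincide (hence so do their cardinalities). -/
theorem divisible_bars_eq (d : ℕ) (hd : Odd d) (h3 : 3 ≤ d) (s q : Finset ℕ)
    (hs : 0 ∉ s) (hq : IsBarQuotientPartition d s q) :
    (barMultisetF s).filter (fun b => d ∣ b) = (barMultisetF q).filter (fun b => d ∣ b) := by
  obtain ⟨hcore, h0run, hquot⟩ := hq
  apply Multiset.ext.2
  intro n
  rw [Multiset.count_filter, Multiset.count_filter]
  by_cases hdn : d ∣ n
  · rw [if_pos hdn, if_pos hdn, count_bar, count_bar]
    obtain ⟨m', rfl⟩ := hdn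
    rw [decomp h3 hd s m', decomp h3 hd q m', h0run]
    congr 1
    apply Finset.sum_congr rfl
    intro i hi
    simp only [Finset.mem_Ioc] at hi
    have hbq : barQuotComp d i s = barQuotComp d i q := hquot i (by omega) hi.2
    have hpo : partitionOfBetaSet (Xset (runnerSet d i s) (runnerSet d (d - i) s))
        = partitionOfBetaSet (Xset (runnerSet d i q) (runnerSet d (d - i) q)) := hbq
    have hkey := pOBS_h1c' hpo m'
    rw [combined_identity, combined_identity] at hkey
    exact hkey
  · rw [if_neg hdn, if_neg hdn]


end BarPartitions
end
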